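/- arXiv:1401.3367 — 3 statements merged into one kernel-verified Lean document; each statement's English description precedes it below -/
import Mathlib

section
/- Let V be a finite-dimensional vector space over K = GF(2) and f : V → V nilpotent, with V = ⟨u_1⟩ ⊕ ⟨u_2⟩, e(u_1) = R, e(u_2) = S, and R + 1 < S. If X is a characteristic subspace of V that is not hyperinvariant, then there exist integers s, q with 0 < s < q and 0 ≤ R − s < S − q such that X = ⟨f^{R−s}(u_1) + f^{S−q}(u_2)⟩^c, and the largest hyperinvariant subspace contained in X is X_H = ⟨f^{R−s+1}(u_1)⟩ + ⟨f^{S−q+1}(u_2)⟩ = f^{R−s+1}(V) ∩ ker(f^{q−1}). -/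
open Module LinearMap

section Defs

variable {K V : Type*} [Field K] [AddCommGroup V] [Module K V]

/-- `α` commutes with `f`. -/
def Commutes (f : V →ₗ[K] V) (α : V ≃ₗ[K] V) : Prop :=
  ∀ v, α (f v) = f (α v)

/-- `X` is hyperinvariant: invariant under every endomorphism commuting with `f`. -/
def Hyperinv (f : V →ₗ[K] V) (X : Submodule K V) : Prop :=
  ∀ g : V →ₗ[K] V, (∀ v, g (f v) = f (g v)) → ∀ x ∈ X, g x ∈ X

/-- `X` is characteristic: `f`-invariant and invariant under every automorphism
commuting with `f`. -/
def Charinv (f : V →ₗ[K] V) (X : Submodule K V) : Prop :=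
  (∀ x ∈ X, f x ∈ X) ∧ ∀ α : V ≃ₗ[K] V, Commutes f α → ∀ x ∈ X, α x ∈ X

/-- The characteristic hull of a set `B`: the subspace spanned by all
`f^i (α b)`, `b ∈ B`, `α` an automorphism commuting with `f`. -/
def charHull (f : V →ₗ[K] V) (B : Set V) : Submodule K V :=
  Submodule.span K
    {y | ∃ b ∈ B, ∃ i : ℕ, ∃ α : V ≃ₗ[K] V, Commutes f α ∧ y = (f ^ i) (α b)}

/-- The `f`-cyclic subspace generated by `x`. -/
def cyc (f : V →ₗ[K] V) (x : V) : Submodule K V :=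
  Submodule.span K (Set.range fun i : ℕ => (f ^ i) x)

/-- The `f`-invariant span of a set `B`. -/
def invSpan (f : V →ₗ[K] V) (B : Set V) : Submodule K V :=
  Submodule.span K {y | ∃ b ∈ B, ∃ i : ℕ, y = (f ^ i) b}

/-- The exponent of `x`: the least `ℓ` with `f^ℓ x = 0`. -/
noncomputable def expnt (f : V →ₗ[K] V) (x : V) : ℕ :=
  sInf {ℓ : ℕ | (f ^ ℓ) x = 0}

/-- The height of `x`: the largest `q` with `x ∈ f^q V`. -/
noncomputable def hgt (f : V →ₗ[K] V) (x : V) : ℕ :=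
  sSup {q : ℕ | x ∈ LinearMap.range (f ^ q)}

/-- `u` is a generator of `V`: `V = ⟨u⟩ ⊕ V₂` for some `f`-invariant `V₂`. -/
def IsGenerator (f : V →ₗ[K] V) (u : V) : Prop :=
  u ≠ 0 ∧ ∃ V₂ : Submodule K V, (∀ x ∈ V₂, f x ∈ V₂) ∧ IsCompl (cyc f u) V₂

/-- `(u 0, …, u (m-1))` is a generator tuple of `V`:
`V = ⟨u 0⟩ ⊕ ⋯ ⊕ ⟨u (m-1)⟩` with nondecreasing exponents. -/
def IsGenTuple {m : ℕ} (f : V →ₗ[K] V) (u : Fin m → V) : Prop :=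
  DirectSum.IsInternal (fun i => cyc f (u i)) ∧ Monotone fun i => expnt f (u i)

/-- The Ulm invariant `d(f,r) = dim ((ker f ⊓ f^{r-1} V) / (ker f ⊓ f^r V))`. -/
noncomputable def ulm (f : V →ₗ[K] V) (r : ℕ) : ℕ :=
  Module.finrank K
    (↥(LinearMap.ker f ⊓ LinearMap.range (f ^ (r - 1))) ⧸
      Submodule.comap (LinearMap.ker f ⊓ LinearMap.range (f ^ (r - 1))).subtype
        (LinearMap.ker f ⊓ LinearMap.range (f ^ r)))

/-- The largest hyperinvariant subspace contained in `X`
(the sum of all hyperinvariant subspaces contained in `X`). -/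
noncomputable def largestHyperinv (f : V →ₗ[K] V) (X : Submodule K V) : Submodule K V :=
  sSup {W : Submodule K V | Hyperinv f W ∧ W ≤ X}

end Defs
namespace Stmt10

open Sum Submodule

set_option linter.unusedSectionVars false

variable {V : Type*} [AddCommGroup V] [Module (ZMod 2) V]

lemma zmod2_ne_zero {x : ZMod 2} (h : x ≠ 0) : x = 1 := by revert x; decide

section Coord

variable {R S : ℕ} (bs : Basis (Fin R ⊕ Fin S) (ZMod 2) V)
variable (f : V →ₗ[ZMod 2] V) (u₁ u₂ : V)

noncomputable def C1 (i : ℕ) : V →ₗ[ZMod 2] ZMod 2 :=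
  if h : i < R then bs.coord (inl ⟨i, h⟩) else 0

noncomputable def C2 (j : ℕ) : V →ₗ[ZMod 2] ZMod 2 :=
  if h : j < S then bs.coord (inr ⟨j, h⟩) else 0

lemma C1_ge {i : ℕ} (h : R ≤ i) (v : V) : C1 bs i v = 0 := by
  unfold C1; rw [dif_neg (by omega)]; rfl

lemma C2_ge {j : ℕ} (h : S ≤ j) (v : V) : C2 bs j v = 0 := by
  unfold C2; rw [dif_neg (by omega)]; rfl

variable (hb1 : ∀ i : Fin R, bs (inl i) = (f ^ (i : ℕ)) u₁)
variable (hb2 : ∀ j : Fin S, bs (inr j) = (f ^ (j : ℕ)) u₂)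
variable (hR0 : (f ^ R) u₁ = 0) (hS0 : (f ^ S) u₂ = 0) (hRS : R ≤ S)

include hb1 hb2 hR0 hS0

lemma pow_u₁_eq_zero {m : ℕ} (h : R ≤ m) : (f ^ m) u₁ = 0 := by
  have hm : f ^ m = f ^ (m - R) * f ^ R := by rw [← pow_add]; congr 1; omega
  rw [hm, Module.End.mul_apply, hR0, map_zero]

lemma pow_u₂_eq_zero {m : ℕ} (h : S ≤ m) : (f ^ m) u₂ = 0 := by
  have hm : f ^ m = f ^ (m - S) * f ^ S := by rw [← pow_add]; congr 1; omega
  rw [hm, Module.End.mul_apply, hS0, map_zero]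

lemma C1_pow_u₁ {m : ℕ} (hm : m < R) (i : ℕ) :
    C1 bs i ((f ^ m) u₁) = if i = m then 1 else 0 := by
  rw [← hb1 ⟨m, hm⟩]
  by_cases h : i < R
  · simp only [C1, dif_pos h, Basis.coord_apply, Basis.repr_self]
    by_cases him : i = m
    · subst him; simp
    · rw [Finsupp.single_apply, if_neg, if_neg him]
      simp only [Sum.inl.injEq, Fin.mk.injEq]
      omega
  · rw [C1_ge bs (le_of_not_gt h), if_neg (by omega)]

lemma C2_pow_u₁ {m : ℕ} (hm : m < R) (j : ℕ) :
    C2 bs j ((f ^ m) u₁) = 0 := by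
  rw [← hb1 ⟨m, hm⟩]
  by_cases h : j < S
  · simp only [C2, dif_pos h, Basis.coord_apply, Basis.repr_self]
    rw [Finsupp.single_apply, if_neg]
    simp
  · exact C2_ge bs (le_of_not_gt h) _

lemma C1_pow_u₂ {m : ℕ} (hm : m < S) (i : ℕ) :
    C1 bs i ((f ^ m) u₂) = 0 := by
  rw [← hb2 ⟨m, hm⟩]
  by_cases h : i < R
  · simp only [C1, dif_pos h, Basis.coord_apply, Basis.repr_self]
    rw [Finsupp.single_apply, if_neg]
    simp
  · exact C1_ge bs (le_of_not_gt h) _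

lemma C2_pow_u₂ {m : ℕ} (hm : m < S) (j : ℕ) :
    C2 bs j ((f ^ m) u₂) = if j = m then 1 else 0 := by
  rw [← hb2 ⟨m, hm⟩]
  by_cases h : j < S
  · simp only [C2, dif_pos h, Basis.coord_apply, Basis.repr_self]
    by_cases hjm : j = m
    · subst hjm; simp
    · rw [Finsupp.single_apply, if_neg, if_neg hjm]
      simp only [Sum.inr.injEq, Fin.mk.injEq]
      omega
  · rw [C2_ge bs (le_of_not_gt h), if_neg (by omega)]

/-- general versions including vanishing beyond the exponent -/
lemma C1_pow_u₁' (m i : ℕ) :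
    C1 bs i ((f ^ m) u₁) = if i = m ∧ m < R then 1 else 0 := by
  by_cases hm : m < R
  · rw [C1_pow_u₁ bs f u₁ u₂ hb1 hb2 hR0 hS0 hm]
    by_cases him : i = m <;> simp [him, hm]
  · rw [pow_u₁_eq_zero bs f u₁ u₂ hb1 hb2 hR0 hS0 (le_of_not_gt hm), map_zero, if_neg (by tauto)]

lemma C2_pow_u₁' (m j : ℕ) : C2 bs j ((f ^ m) u₁) = 0 := by
  by_cases hm : m < R
  · exact C2_pow_u₁ bs f u₁ u₂ hb1 hb2 hR0 hS0 hm j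
  · rw [pow_u₁_eq_zero bs f u₁ u₂ hb1 hb2 hR0 hS0 (le_of_not_gt hm), map_zero]

lemma C1_pow_u₂' (m i : ℕ) : C1 bs i ((f ^ m) u₂) = 0 := by
  by_cases hm : m < S
  · exact C1_pow_u₂ bs f u₁ u₂ hb1 hb2 hR0 hS0 hm i
  · rw [pow_u₂_eq_zero bs f u₁ u₂ hb1 hb2 hR0 hS0 (le_of_not_gt hm), map_zero]

lemma C2_pow_u₂' (m j : ℕ) :
    C2 bs j ((f ^ m) u₂) = if j = m ∧ m < S then 1 else 0 := by
  by_cases hm : m < S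
  · rw [C2_pow_u₂ bs f u₁ u₂ hb1 hb2 hR0 hS0 hm]
    by_cases hjm : j = m <;> simp [hjm, hm]
  · rw [pow_u₂_eq_zero bs f u₁ u₂ hb1 hb2 hR0 hS0 (le_of_not_gt hm), map_zero, if_neg (by tauto)]

lemma vec_eq_zero (v : V) (h1 : ∀ i, C1 bs i v = 0) (h2 : ∀ j, C2 bs j v = 0) :
    v = 0 := by
  have : bs.repr v = 0 := by
    ext p
    rcases p with i | j
    · have := h1 i.1
      simpa only [C1, dif_pos i.isLt, Basis.coord_apply, Fin.eta, Finsupp.zero_apply] using this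
    · have := h2 j.1
      simpa only [C2, dif_pos j.isLt, Basis.coord_apply, Fin.eta, Finsupp.zero_apply] using this
  simpa using congrArg bs.repr.symm this

end Coord

end Stmt10
namespace Stmt10

open Sum Submodule

set_option linter.unusedSectionVars false
set_option maxHeartbeats 1000000

variable {V : Type*} [AddCommGroup V] [Module (ZMod 2) V]

lemma exists_auto (f n : V →ₗ[ZMod 2] V) (hc : ∀ v, n (f v) = f (n v)) (m : ℕ)
    (hm : n ^ m = 0) :
    ∃ α : V ≃ₗ[ZMod 2] V, Commutes f α ∧ ∀ v, α v = v + n v := by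
  have hnil : IsNilpotent (-n) := ⟨m, by rw [neg_pow, hm, mul_zero]⟩
  have hu : IsUnit (1 + n) := by
    have := hnil.isUnit_one_sub
    rwa [sub_neg_eq_add] at this
  have hbij := (Module.End.isUnit_iff _).mp hu
  refine ⟨LinearEquiv.ofBijective (1 + n) hbij, ?_, ?_⟩
  · intro v
    show (1 + n) (f v) = f ((1 + n) v)
    simp only [LinearMap.add_apply, Module.End.one_apply, map_add, hc v]
  · intro v
    show (1 + n) v = v + n v
    simp only [LinearMap.add_apply, Module.End.one_apply]

section Coord2

variable {R S : ℕ} (bs : Basis (Fin R ⊕ Fin S) (ZMod 2) V)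
variable (f : V →ₗ[ZMod 2] V) (u₁ u₂ : V)
variable (hb1 : ∀ i : Fin R, bs (inl i) = (f ^ (i : ℕ)) u₁)
variable (hb2 : ∀ j : Fin S, bs (inr j) = (f ^ (j : ℕ)) u₂)
variable (hR0 : (f ^ R) u₁ = 0) (hS0 : (f ^ S) u₂ = 0) (hRS : R ≤ S)

lemma pow_pow (m k : ℕ) (w : V) : (f ^ m) ((f ^ k) w) = (f ^ (m + k)) w := by
  rw [pow_add, Module.End.mul_apply]

lemma pow_apply_succ (m : ℕ) (w : V) : f ((f ^ m) w) = (f ^ (m + 1)) w := by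
  rw [pow_succ']; rfl

include hb1 hb2 hR0 hS0

lemma C1_f {i : ℕ} (h1 : 1 ≤ i) (h2 : i < R) (v : V) :
    C1 bs i (f v) = C1 bs (i - 1) v := by
  have key : (C1 bs i).comp f = C1 bs (i - 1) := by
    apply bs.ext
    rintro (i' | j')
    · rw [LinearMap.comp_apply, hb1 i', pow_apply_succ,
        C1_pow_u₁' bs f u₁ u₂ hb1 hb2 hR0 hS0, C1_pow_u₁' bs f u₁ u₂ hb1 hb2 hR0 hS0]
      have hi' := i'.isLt
      by_cases hc : i - 1 = (i' : ℕ)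
      · rw [if_pos ⟨by omega, by omega⟩, if_pos ⟨hc, hi'⟩]
      · rw [if_neg (by omega), if_neg (by omega)]
    · rw [LinearMap.comp_apply, hb2 j', pow_apply_succ,
        C1_pow_u₂' bs f u₁ u₂ hb1 hb2 hR0 hS0, C1_pow_u₂' bs f u₁ u₂ hb1 hb2 hR0 hS0]
  exact LinearMap.congr_fun key v

lemma C1_f0 (v : V) : C1 bs 0 (f v) = 0 := by
  by_cases hR : 0 < R
  · have key : (C1 bs 0).comp f = 0 := by
      apply bs.ext
      rintro (i' | j')
      · rw [LinearMap.comp_apply, hb1 i', pow_apply_succ,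
          C1_pow_u₁' bs f u₁ u₂ hb1 hb2 hR0 hS0, if_neg (by omega)]
        rfl
      · rw [LinearMap.comp_apply, hb2 j', pow_apply_succ,
          C1_pow_u₂' bs f u₁ u₂ hb1 hb2 hR0 hS0]
        rfl
    exact LinearMap.congr_fun key v
  · exact C1_ge bs (by omega) _

lemma C2_f {j : ℕ} (h1 : 1 ≤ j) (h2 : j < S) (v : V) :
    C2 bs j (f v) = C2 bs (j - 1) v := by
  have key : (C2 bs j).comp f = C2 bs (j - 1) := by
    apply bs.ext
    rintro (i' | j')
    · rw [LinearMap.comp_apply, hb1 i', pow_apply_succ,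
        C2_pow_u₁' bs f u₁ u₂ hb1 hb2 hR0 hS0, C2_pow_u₁' bs f u₁ u₂ hb1 hb2 hR0 hS0]
    · rw [LinearMap.comp_apply, hb2 j', pow_apply_succ,
        C2_pow_u₂' bs f u₁ u₂ hb1 hb2 hR0 hS0, C2_pow_u₂' bs f u₁ u₂ hb1 hb2 hR0 hS0]
      have hj' := j'.isLt
      by_cases hc : j - 1 = (j' : ℕ)
      · rw [if_pos ⟨by omega, by omega⟩, if_pos ⟨hc, hj'⟩]
      · rw [if_neg (by omega), if_neg (by omega)]
  exact LinearMap.congr_fun key v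

lemma C2_f0 (v : V) : C2 bs 0 (f v) = 0 := by
  by_cases hS : 0 < S
  · have key : (C2 bs 0).comp f = 0 := by
      apply bs.ext
      rintro (i' | j')
      · rw [LinearMap.comp_apply, hb1 i', pow_apply_succ,
          C2_pow_u₁' bs f u₁ u₂ hb1 hb2 hR0 hS0]
        rfl
      · rw [LinearMap.comp_apply, hb2 j', pow_apply_succ,
          C2_pow_u₂' bs f u₁ u₂ hb1 hb2 hR0 hS0, if_neg (by omega)]
        rfl
    exact LinearMap.congr_fun key v
  · exact C2_ge bs (by omega) _

lemma C1_pow_lt {k i : ℕ} (h : i < k) (v : V) : C1 bs i ((f ^ k) v) = 0 := by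
  induction k generalizing i v with
  | zero => omega
  | succ k ih =>
    rw [← pow_apply_succ f] at *
    rcases Nat.eq_zero_or_pos i with hi | hi
    · subst hi; exact C1_f0 bs f u₁ u₂ hb1 hb2 hR0 hS0 _
    · by_cases hiR : i < R
      · rw [C1_f bs f u₁ u₂ hb1 hb2 hR0 hS0 hi hiR]
        exact ih (by omega) v
      · exact C1_ge bs (by omega) _

lemma C2_pow_lt {k j : ℕ} (h : j < k) (v : V) : C2 bs j ((f ^ k) v) = 0 := by
  induction k generalizing j v with
  | zero => omega
  | succ k ih =>
    rw [← pow_apply_succ f]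
    rcases Nat.eq_zero_or_pos j with hj | hj
    · subst hj; exact C2_f0 bs f u₁ u₂ hb1 hb2 hR0 hS0 _
    · by_cases hjS : j < S
      · rw [C2_f bs f u₁ u₂ hb1 hb2 hR0 hS0 hj hjS]
        exact ih (by omega) v
      · exact C2_ge bs (by omega) _

lemma C1_pow_ge {k i : ℕ} (hk : k ≤ i) (hi : i < R) (v : V) :
    C1 bs i ((f ^ k) v) = C1 bs (i - k) v := by
  induction k generalizing i with
  | zero => simp
  | succ k ih =>
    rw [← pow_apply_succ f, C1_f bs f u₁ u₂ hb1 hb2 hR0 hS0 (by omega) hi,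
      ih (i := i - 1) (by omega) (by omega), show i - 1 - k = i - (k+1) by omega]

lemma C2_pow_ge {k j : ℕ} (hk : k ≤ j) (hj : j < S) (v : V) :
    C2 bs j ((f ^ k) v) = C2 bs (j - k) v := by
  induction k generalizing j with
  | zero => simp
  | succ k ih =>
    rw [← pow_apply_succ f, C2_f bs f u₁ u₂ hb1 hb2 hR0 hS0 (by omega) hj,
      ih (j := j - 1) (by omega) (by omega), show j - 1 - k = j - (k+1) by omega]

end Coord2

end Stmt10
namespace Stmt10

open Sum Submodule

set_option linter.unusedSectionVars false
set_option maxHeartbeats 1000000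

variable {V : Type*} [AddCommGroup V] [Module (ZMod 2) V]

section Coord3

variable {R S : ℕ} (bs : Basis (Fin R ⊕ Fin S) (ZMod 2) V)
variable (f : V →ₗ[ZMod 2] V) (u₁ u₂ : V)

noncomputable def endo (w1 w2 : V) : V →ₗ[ZMod 2] V :=
  bs.constr (ZMod 2)
    (Sum.elim (fun i : Fin R => (f ^ (i : ℕ)) w1) (fun j : Fin S => (f ^ (j : ℕ)) w2))

variable (hb1 : ∀ i : Fin R, bs (inl i) = (f ^ (i : ℕ)) u₁)
variable (hb2 : ∀ j : Fin S, bs (inr j) = (f ^ (j : ℕ)) u₂)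
variable (hR0 : (f ^ R) u₁ = 0) (hS0 : (f ^ S) u₂ = 0) (hRS : R ≤ S)

include hb1 hb2 hR0 hS0

lemma endo_pow_u₁ (w1 w2 : V) (hw1 : (f ^ R) w1 = 0) (m : ℕ) :
    endo bs f w1 w2 ((f ^ m) u₁) = (f ^ m) w1 := by
  by_cases hm : m < R
  · rw [← hb1 ⟨m, hm⟩, endo, Basis.constr_basis]
    rfl
  · rw [pow_u₁_eq_zero bs f u₁ u₂ hb1 hb2 hR0 hS0 (by omega), map_zero]
    have : (f ^ m) w1 = (f ^ (m - R)) ((f ^ R) w1) := by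
      rw [pow_pow, show m - R + R = m from by omega]
    rw [this, hw1, map_zero]

lemma endo_pow_u₂ (w1 w2 : V) (hw2 : (f ^ S) w2 = 0) (m : ℕ) :
    endo bs f w1 w2 ((f ^ m) u₂) = (f ^ m) w2 := by
  by_cases hm : m < S
  · rw [← hb2 ⟨m, hm⟩, endo, Basis.constr_basis]
    rfl
  · rw [pow_u₂_eq_zero bs f u₁ u₂ hb1 hb2 hR0 hS0 (by omega), map_zero]
    have : (f ^ m) w2 = (f ^ (m - S)) ((f ^ S) w2) := by
      rw [pow_pow, show m - S + S = m from by omega]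
    rw [this, hw2, map_zero]

lemma endo_comm (w1 w2 : V) (hw1 : (f ^ R) w1 = 0) (hw2 : (f ^ S) w2 = 0) :
    ∀ v, endo bs f w1 w2 (f v) = f (endo bs f w1 w2 v) := by
  have key : (endo bs f w1 w2).comp f = f.comp (endo bs f w1 w2) := by
    apply bs.ext
    rintro (i' | j')
    · rw [LinearMap.comp_apply, LinearMap.comp_apply, hb1 i', pow_apply_succ,
        endo_pow_u₁ bs f u₁ u₂ hb1 hb2 hR0 hS0 w1 w2 hw1,
        endo_pow_u₁ bs f u₁ u₂ hb1 hb2 hR0 hS0 w1 w2 hw1, pow_apply_succ]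
    · rw [LinearMap.comp_apply, LinearMap.comp_apply, hb2 j', pow_apply_succ,
        endo_pow_u₂ bs f u₁ u₂ hb1 hb2 hR0 hS0 w1 w2 hw2,
        endo_pow_u₂ bs f u₁ u₂ hb1 hb2 hR0 hS0 w1 w2 hw2, pow_apply_succ]
  exact fun v => LinearMap.congr_fun key v

omit hb1 hb2 hR0 hS0 in
lemma endo_u₁pow_valid (k : ℕ) (hR0 : (f ^ R) u₁ = 0) : (f ^ R) ((f ^ k) u₁) = 0 := by
  rw [pow_pow]
  have : (f ^ (R + k)) u₁ = (f ^ k) ((f ^ R) u₁) := by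
    rw [pow_pow, show k + R = R + k from Nat.add_comm k R]
  rw [this, hR0, map_zero]

omit hb1 hb2 hR0 hS0 in
lemma endo_u₂pow_valid (k : ℕ) (hS0 : (f ^ S) u₂ = 0) : (f ^ S) ((f ^ k) u₂) = 0 := by
  rw [pow_pow]
  have : (f ^ (S + k)) u₂ = (f ^ k) ((f ^ S) u₂) := by
    rw [pow_pow, show k + S = S + k from Nat.add_comm k S]
  rw [this, hS0, map_zero]


omit hb1 hb2 hR0 hS0 in
lemma pow_u₁_S (hR0 : (f ^ R) u₁ = 0) (hRS : R ≤ S) : (f ^ S) u₁ = 0 := by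
  have h : (f ^ S) u₁ = (f ^ (S - R)) ((f ^ R) u₁) := by
    rw [pow_pow, show S - R + R = S from by omega]
  rw [h, hR0, map_zero]

/-- `n1 k := endo (f^k u₁) 0` -/
lemma n1_pow (k : ℕ) (hk : 1 ≤ k) (hRS : R ≤ S) (hS : 1 ≤ S) :
    (endo bs f ((f ^ k) u₁) 0) ^ S = 0 := by
  set n := endo bs f ((f ^ k) u₁) 0 with hn
  have hw1 : (f ^ R) ((f ^ k) u₁) = 0 := endo_u₁pow_valid f u₁ k hR0
  have aux : ∀ t m : ℕ, (n ^ t) ((f ^ m) u₁) = (f ^ (m + t * k)) u₁ := by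
    intro t
    induction t with
    | zero => intro m; simp
    | succ t ih =>
      intro m
      rw [pow_succ, Module.End.mul_apply, hn,
        endo_pow_u₁ bs f u₁ u₂ hb1 hb2 hR0 hS0 _ _ hw1 m, pow_pow, ih,
        show m + k + t * k = m + (t + 1) * k by ring]
  have aux2 : ∀ m : ℕ, n ((f ^ m) u₂) = 0 := by
    intro m
    rw [hn, endo_pow_u₂ bs f u₁ u₂ hb1 hb2 hR0 hS0 _ _ (map_zero _) m, map_zero]
  apply bs.ext
  rintro (i' | j')
  · rw [hb1 i', aux S i', LinearMap.zero_apply]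
    apply pow_u₁_eq_zero bs f u₁ u₂ hb1 hb2 hR0 hS0
    have : S * 1 ≤ S * k := Nat.mul_le_mul_left S hk
    omega
  · rw [hb2 j', show (n ^ S) = n ^ (S - 1) * n by rw [← pow_succ, show S - 1 + 1 = S from by omega],
      Module.End.mul_apply, aux2, map_zero, LinearMap.zero_apply]

/-- `n2 k := endo 0 (f^k u₂)` -/
lemma n2_pow (k : ℕ) (hk : 1 ≤ k) (hS : 1 ≤ S) :
    (endo bs f 0 ((f ^ k) u₂)) ^ S = 0 := by
  set n := endo bs f 0 ((f ^ k) u₂) with hn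
  have hw2 : (f ^ S) ((f ^ k) u₂) = 0 := endo_u₂pow_valid f u₂ k hS0
  have aux : ∀ t m : ℕ, (n ^ t) ((f ^ m) u₂) = (f ^ (m + t * k)) u₂ := by
    intro t
    induction t with
    | zero => intro m; simp
    | succ t ih =>
      intro m
      rw [pow_succ, Module.End.mul_apply, hn,
        endo_pow_u₂ bs f u₁ u₂ hb1 hb2 hR0 hS0 _ _ hw2 m, pow_pow, ih,
        show m + k + t * k = m + (t + 1) * k by ring]
  have aux2 : ∀ m : ℕ, n ((f ^ m) u₁) = 0 := by
    intro m
    rw [hn, endo_pow_u₁ bs f u₁ u₂ hb1 hb2 hR0 hS0 _ _ (map_zero _) m, map_zero]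
  apply bs.ext
  rintro (i' | j')
  · rw [hb1 i', show (n ^ S) = n ^ (S - 1) * n by rw [← pow_succ, show S - 1 + 1 = S from by omega],
      Module.End.mul_apply, aux2, map_zero, LinearMap.zero_apply]
  · rw [hb2 j', aux S j', LinearMap.zero_apply]
    apply pow_u₂_eq_zero bs f u₁ u₂ hb1 hb2 hR0 hS0
    have : S * 1 ≤ S * k := Nat.mul_le_mul_left S hk
    omega

/-- `n3 := endo 0 u₁`  (u₂ ↦ u₁) -/
lemma n3_sq (hRS : R ≤ S) : (endo bs f 0 u₁) ^ 2 = 0 := by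
  set n := endo bs f 0 u₁ with hn
  have hw2 : (f ^ S) u₁ = 0 := pow_u₁_S f u₁ hR0 hRS
  have aux1 : ∀ m : ℕ, n ((f ^ m) u₁) = 0 := by
    intro m
    rw [hn, endo_pow_u₁ bs f u₁ u₂ hb1 hb2 hR0 hS0 _ _ (map_zero _) m, map_zero]
  apply bs.ext
  rintro (i' | j')
  · rw [hb1 i', pow_two, Module.End.mul_apply, aux1, map_zero, LinearMap.zero_apply]
  · rw [hb2 j', pow_two, Module.End.mul_apply, hn,
      endo_pow_u₂ bs f u₁ u₂ hb1 hb2 hR0 hS0 _ _ hw2 j', ← hn, aux1,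
      LinearMap.zero_apply]

/-- `n4 := endo (f^(S-R) u₂) 0`  (u₁ ↦ f^(S-R) u₂) -/
lemma n4_sq (hRS : R ≤ S) : (endo bs f ((f ^ (S - R)) u₂) 0) ^ 2 = 0 := by
  set n := endo bs f ((f ^ (S - R)) u₂) 0 with hn
  have hw1 : (f ^ R) ((f ^ (S - R)) u₂) = 0 := by
    rw [pow_pow, show R + (S - R) = S by omega, hS0]
  have aux2 : ∀ m : ℕ, n ((f ^ m) u₂) = 0 := by
    intro m
    rw [hn, endo_pow_u₂ bs f u₁ u₂ hb1 hb2 hR0 hS0 _ _ (map_zero _) m, map_zero]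
  apply bs.ext
  rintro (i' | j')
  · rw [hb1 i', pow_two, Module.End.mul_apply, hn,
      endo_pow_u₁ bs f u₁ u₂ hb1 hb2 hR0 hS0 _ _ hw1 i', ← hn, pow_pow, aux2,
      LinearMap.zero_apply]
  · rw [hb2 j', pow_two, Module.End.mul_apply, aux2, map_zero, LinearMap.zero_apply]

end Coord3

end Stmt10
namespace Stmt10

open Sum Submodule

set_option linter.unusedSectionVars false
set_option maxHeartbeats 1000000

variable {V : Type*} [AddCommGroup V] [Module (ZMod 2) V]

section Coord4

variable {R S : ℕ} (bs : Basis (Fin R ⊕ Fin S) (ZMod 2) V)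
variable (f : V →ₗ[ZMod 2] V) (u₁ u₂ : V)
variable (hb1 : ∀ i : Fin R, bs (inl i) = (f ^ (i : ℕ)) u₁)
variable (hb2 : ∀ j : Fin S, bs (inr j) = (f ^ (j : ℕ)) u₂)
variable (hR0 : (f ^ R) u₁ = 0) (hS0 : (f ^ S) u₂ = 0) (hRS : R ≤ S)

include hb1 hb2 hR0 hS0

lemma C1_n1 (k : ℕ) {i : ℕ} (hk : k ≤ i) (hi : i < R) (v : V) :
    C1 bs i (endo bs f ((f ^ k) u₁) 0 v) = C1 bs (i - k) v := by
  have hw1 : (f ^ R) ((f ^ k) u₁) = 0 := endo_u₁pow_valid f u₁ k hR0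
  have key : (C1 bs i).comp (endo bs f ((f ^ k) u₁) 0) = C1 bs (i - k) := by
    apply bs.ext
    rintro (i' | j')
    · have hi' := i'.isLt
      rw [LinearMap.comp_apply, hb1 i',
        endo_pow_u₁ bs f u₁ u₂ hb1 hb2 hR0 hS0 _ _ hw1, pow_pow,
        C1_pow_u₁' bs f u₁ u₂ hb1 hb2 hR0 hS0,
        C1_pow_u₁' bs f u₁ u₂ hb1 hb2 hR0 hS0]
      by_cases hc : i - k = (i' : ℕ)
      · rw [if_pos ⟨by omega, by omega⟩, if_pos ⟨hc, hi'⟩]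
      · rw [if_neg (by omega), if_neg (by omega)]
    · rw [LinearMap.comp_apply, hb2 j',
        endo_pow_u₂ bs f u₁ u₂ hb1 hb2 hR0 hS0 _ _ (map_zero _), map_zero, map_zero,
        C1_pow_u₂' bs f u₁ u₂ hb1 hb2 hR0 hS0]
  exact LinearMap.congr_fun key v

lemma C1_n1_lt (k : ℕ) {i : ℕ} (h : i < k) (v : V) :
    C1 bs i (endo bs f ((f ^ k) u₁) 0 v) = 0 := by
  have hw1 : (f ^ R) ((f ^ k) u₁) = 0 := endo_u₁pow_valid f u₁ k hR0
  have key : (C1 bs i).comp (endo bs f ((f ^ k) u₁) 0) = 0 := by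
    apply bs.ext
    rintro (i' | j')
    · rw [LinearMap.comp_apply, hb1 i',
        endo_pow_u₁ bs f u₁ u₂ hb1 hb2 hR0 hS0 _ _ hw1, pow_pow,
        C1_pow_u₁' bs f u₁ u₂ hb1 hb2 hR0 hS0, if_neg (by omega)]
      rfl
    · rw [LinearMap.comp_apply, hb2 j',
        endo_pow_u₂ bs f u₁ u₂ hb1 hb2 hR0 hS0 _ _ (map_zero _), map_zero, map_zero]
      rfl
  exact LinearMap.congr_fun key v

lemma C2_n1 (k j : ℕ) (v : V) :
    C2 bs j (endo bs f ((f ^ k) u₁) 0 v) = 0 := by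
  have hw1 : (f ^ R) ((f ^ k) u₁) = 0 := endo_u₁pow_valid f u₁ k hR0
  have key : (C2 bs j).comp (endo bs f ((f ^ k) u₁) 0) = 0 := by
    apply bs.ext
    rintro (i' | j')
    · rw [LinearMap.comp_apply, hb1 i',
        endo_pow_u₁ bs f u₁ u₂ hb1 hb2 hR0 hS0 _ _ hw1, pow_pow,
        C2_pow_u₁' bs f u₁ u₂ hb1 hb2 hR0 hS0]
      rfl
    · rw [LinearMap.comp_apply, hb2 j',
        endo_pow_u₂ bs f u₁ u₂ hb1 hb2 hR0 hS0 _ _ (map_zero _), map_zero, map_zero]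
      rfl
  exact LinearMap.congr_fun key v

lemma C2_n2 (k : ℕ) {j : ℕ} (hk : k ≤ j) (hj : j < S) (v : V) :
    C2 bs j (endo bs f 0 ((f ^ k) u₂) v) = C2 bs (j - k) v := by
  have hw2 : (f ^ S) ((f ^ k) u₂) = 0 := endo_u₂pow_valid f u₂ k hS0
  have key : (C2 bs j).comp (endo bs f 0 ((f ^ k) u₂)) = C2 bs (j - k) := by
    apply bs.ext
    rintro (i' | j')
    · rw [LinearMap.comp_apply, hb1 i',
        endo_pow_u₁ bs f u₁ u₂ hb1 hb2 hR0 hS0 _ _ (map_zero _), map_zero, map_zero,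
        C2_pow_u₁' bs f u₁ u₂ hb1 hb2 hR0 hS0]
    · have hj' := j'.isLt
      rw [LinearMap.comp_apply, hb2 j',
        endo_pow_u₂ bs f u₁ u₂ hb1 hb2 hR0 hS0 _ _ hw2, pow_pow,
        C2_pow_u₂' bs f u₁ u₂ hb1 hb2 hR0 hS0,
        C2_pow_u₂' bs f u₁ u₂ hb1 hb2 hR0 hS0]
      by_cases hc : j - k = (j' : ℕ)
      · rw [if_pos ⟨by omega, by omega⟩, if_pos ⟨hc, hj'⟩]
      · rw [if_neg (by omega), if_neg (by omega)]
  exact LinearMap.congr_fun key v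

lemma C2_n2_lt (k : ℕ) {j : ℕ} (h : j < k) (v : V) :
    C2 bs j (endo bs f 0 ((f ^ k) u₂) v) = 0 := by
  have hw2 : (f ^ S) ((f ^ k) u₂) = 0 := endo_u₂pow_valid f u₂ k hS0
  have key : (C2 bs j).comp (endo bs f 0 ((f ^ k) u₂)) = 0 := by
    apply bs.ext
    rintro (i' | j')
    · rw [LinearMap.comp_apply, hb1 i',
        endo_pow_u₁ bs f u₁ u₂ hb1 hb2 hR0 hS0 _ _ (map_zero _), map_zero, map_zero]
      rfl
    · rw [LinearMap.comp_apply, hb2 j',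
        endo_pow_u₂ bs f u₁ u₂ hb1 hb2 hR0 hS0 _ _ hw2, pow_pow,
        C2_pow_u₂' bs f u₁ u₂ hb1 hb2 hR0 hS0, if_neg (by omega)]
      rfl
  exact LinearMap.congr_fun key v

lemma C1_n2 (k i : ℕ) (v : V) :
    C1 bs i (endo bs f 0 ((f ^ k) u₂) v) = 0 := by
  have hw2 : (f ^ S) ((f ^ k) u₂) = 0 := endo_u₂pow_valid f u₂ k hS0
  have key : (C1 bs i).comp (endo bs f 0 ((f ^ k) u₂)) = 0 := by
    apply bs.ext
    rintro (i' | j')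
    · rw [LinearMap.comp_apply, hb1 i',
        endo_pow_u₁ bs f u₁ u₂ hb1 hb2 hR0 hS0 _ _ (map_zero _), map_zero, map_zero]
      rfl
    · rw [LinearMap.comp_apply, hb2 j',
        endo_pow_u₂ bs f u₁ u₂ hb1 hb2 hR0 hS0 _ _ hw2, pow_pow,
        C1_pow_u₂' bs f u₁ u₂ hb1 hb2 hR0 hS0]
      rfl
  exact LinearMap.congr_fun key v

include hRS in
lemma C1_n3 {i : ℕ} (hi : i < R) (v : V) :
    C1 bs i (endo bs f 0 u₁ v) = C2 bs i v := by
  have hw2 : (f ^ S) u₁ = 0 := pow_u₁_S f u₁ hR0 hRS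
  have key : (C1 bs i).comp (endo bs f 0 u₁) = C2 bs i := by
    apply bs.ext
    rintro (i' | j')
    · rw [LinearMap.comp_apply, hb1 i',
        endo_pow_u₁ bs f u₁ u₂ hb1 hb2 hR0 hS0 _ _ (map_zero _), map_zero, map_zero,
        C2_pow_u₁' bs f u₁ u₂ hb1 hb2 hR0 hS0]
    · have hj' := j'.isLt
      rw [LinearMap.comp_apply, hb2 j',
        endo_pow_u₂ bs f u₁ u₂ hb1 hb2 hR0 hS0 _ _ hw2,
        C1_pow_u₁' bs f u₁ u₂ hb1 hb2 hR0 hS0,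
        C2_pow_u₂' bs f u₁ u₂ hb1 hb2 hR0 hS0]
      by_cases hc : i = (j' : ℕ)
      · rw [if_pos ⟨hc, by omega⟩, if_pos ⟨hc, by omega⟩]
      · rw [if_neg (by omega), if_neg (by omega)]
  exact LinearMap.congr_fun key v

include hRS in
lemma C2_n3 (j : ℕ) (v : V) :
    C2 bs j (endo bs f 0 u₁ v) = 0 := by
  have hw2 : (f ^ S) u₁ = 0 := pow_u₁_S f u₁ hR0 hRS
  have key : (C2 bs j).comp (endo bs f 0 u₁) = 0 := by
    apply bs.ext
    rintro (i' | j')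
    · rw [LinearMap.comp_apply, hb1 i',
        endo_pow_u₁ bs f u₁ u₂ hb1 hb2 hR0 hS0 _ _ (map_zero _), map_zero, map_zero]
      rfl
    · rw [LinearMap.comp_apply, hb2 j',
        endo_pow_u₂ bs f u₁ u₂ hb1 hb2 hR0 hS0 _ _ hw2,
        C2_pow_u₁' bs f u₁ u₂ hb1 hb2 hR0 hS0]
      rfl
  exact LinearMap.congr_fun key v

include hRS in
lemma C2_n4 {j : ℕ} (hj : S - R ≤ j) (v : V) :
    C2 bs j (endo bs f ((f ^ (S - R)) u₂) 0 v) = C1 bs (j - (S - R)) v := by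
  have hw1 : (f ^ R) ((f ^ (S - R)) u₂) = 0 := by
    rw [pow_pow, show R + (S - R) = S from by omega, hS0]
  have key : (C2 bs j).comp (endo bs f ((f ^ (S - R)) u₂) 0) = C1 bs (j - (S - R)) := by
    apply bs.ext
    rintro (i' | j')
    · have hi' := i'.isLt
      rw [LinearMap.comp_apply, hb1 i',
        endo_pow_u₁ bs f u₁ u₂ hb1 hb2 hR0 hS0 _ _ hw1, pow_pow,
        C2_pow_u₂' bs f u₁ u₂ hb1 hb2 hR0 hS0,
        C1_pow_u₁' bs f u₁ u₂ hb1 hb2 hR0 hS0]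
      by_cases hc : j - (S - R) = (i' : ℕ)
      · rw [if_pos ⟨by omega, by omega⟩, if_pos ⟨hc, hi'⟩]
      · rw [if_neg (by omega), if_neg (by omega)]
    · rw [LinearMap.comp_apply, hb2 j',
        endo_pow_u₂ bs f u₁ u₂ hb1 hb2 hR0 hS0 _ _ (map_zero _), map_zero, map_zero,
        C1_pow_u₂' bs f u₁ u₂ hb1 hb2 hR0 hS0]
  exact LinearMap.congr_fun key v

lemma C1_n4 (i : ℕ) (v : V) :
    C1 bs i (endo bs f ((f ^ (S - R)) u₂) 0 v) = 0 := by
  have hw1 : (f ^ R) ((f ^ (S - R)) u₂) = 0 := by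
    by_cases hRS' : R ≤ S
    · rw [pow_pow, show R + (S - R) = S from by omega, hS0]
    · rw [show S - R = 0 from by omega, pow_zero, Module.End.one_apply]
      exact pow_u₂_eq_zero bs f u₁ u₂ hb1 hb2 hR0 hS0 (by omega)
  have key : (C1 bs i).comp (endo bs f ((f ^ (S - R)) u₂) 0) = 0 := by
    apply bs.ext
    rintro (i' | j')
    · rw [LinearMap.comp_apply, hb1 i',
        endo_pow_u₁ bs f u₁ u₂ hb1 hb2 hR0 hS0 _ _ hw1, pow_pow,
        C1_pow_u₂' bs f u₁ u₂ hb1 hb2 hR0 hS0]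
      rfl
    · rw [LinearMap.comp_apply, hb2 j',
        endo_pow_u₂ bs f u₁ u₂ hb1 hb2 hR0 hS0 _ _ (map_zero _), map_zero, map_zero]
      rfl
  exact LinearMap.congr_fun key v

end Coord4

end Stmt10
namespace Stmt10

open Sum Submodule

set_option linter.unusedSectionVars false
set_option maxHeartbeats 1000000

variable {V : Type*} [AddCommGroup V] [Module (ZMod 2) V]

section Coord5

variable {R S : ℕ} (bs : Basis (Fin R ⊕ Fin S) (ZMod 2) V)
variable (f : V →ₗ[ZMod 2] V) (u₁ u₂ : V)

/-- the "coordinate block" submodule -/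
noncomputable def Dd (k l : ℕ) : Submodule (ZMod 2) V :=
  cyc f ((f ^ k) u₁) ⊔ cyc f ((f ^ l) u₂)

lemma cyc_le_iff (x : V) (W : Submodule (ZMod 2) V) :
    cyc f x ≤ W ↔ ∀ i : ℕ, (f ^ i) x ∈ W := by
  constructor
  · intro h i; exact h (Submodule.subset_span ⟨i, rfl⟩)
  · intro h
    apply Submodule.span_le.mpr
    rintro y ⟨i, rfl⟩
    exact h i

lemma cyc_zero : cyc f (0 : V) = ⊥ := by
  apply le_antisymm _ bot_le
  apply Submodule.span_le.mpr
  rintro y ⟨i, rfl⟩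
  simp

variable (hb1 : ∀ i : Fin R, bs (inl i) = (f ^ (i : ℕ)) u₁)
variable (hb2 : ∀ j : Fin S, bs (inr j) = (f ^ (j : ℕ)) u₂)
variable (hR0 : (f ^ R) u₁ = 0) (hS0 : (f ^ S) u₂ = 0) (hRS : R ≤ S)

include hb1 hb2 hR0 hS0

omit hb1 hb2 hS0 in
lemma pow_gen_mem_Dd₁ {k i : ℕ} (h : k ≤ i) (l : ℕ) : (f ^ i) u₁ ∈ Dd f u₁ u₂ k l := by
  have : (f ^ i) u₁ = (f ^ (i - k)) ((f ^ k) u₁) := by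
    rw [pow_pow, show i - k + k = i from by omega]
  rw [this]
  exact le_sup_left (α := Submodule (ZMod 2) V) (Submodule.subset_span ⟨i - k, rfl⟩)

omit hb1 hb2 hR0 in
lemma pow_gen_mem_Dd₂ {l j : ℕ} (h : l ≤ j) (k : ℕ) : (f ^ j) u₂ ∈ Dd f u₁ u₂ k l := by
  have : (f ^ j) u₂ = (f ^ (j - l)) ((f ^ l) u₂) := by
    rw [pow_pow, show j - l + l = j from by omega]
  rw [this]
  exact le_sup_right (α := Submodule (ZMod 2) V) (Submodule.subset_span ⟨j - l, rfl⟩)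

lemma mem_Dd_iff (k l : ℕ) (v : V) :
    v ∈ Dd f u₁ u₂ k l ↔ (∀ i < k, C1 bs i v = 0) ∧ (∀ j < l, C2 bs j v = 0) := by
  constructor
  · intro hv
    rw [Dd, cyc, cyc, ← Submodule.span_union] at hv
    refine Submodule.span_induction ?_ ?_ ?_ ?_ hv
    · rintro y (⟨i, rfl⟩ | ⟨j, rfl⟩)
      · dsimp only
        rw [pow_pow]
        constructor
        · intro i' hi'
          rw [C1_pow_u₁' bs f u₁ u₂ hb1 hb2 hR0 hS0, if_neg (by omega)]
        · intro j' hj'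
          rw [C2_pow_u₁' bs f u₁ u₂ hb1 hb2 hR0 hS0]
      · dsimp only
        rw [pow_pow]
        constructor
        · intro i' hi'
          rw [C1_pow_u₂' bs f u₁ u₂ hb1 hb2 hR0 hS0]
        · intro j' hj'
          rw [C2_pow_u₂' bs f u₁ u₂ hb1 hb2 hR0 hS0, if_neg (by omega)]
    · exact ⟨fun i _ => map_zero _, fun j _ => map_zero _⟩
    · rintro x y - - ⟨hx1, hx2⟩ ⟨hy1, hy2⟩
      exact ⟨fun i hi => by rw [map_add, hx1 i hi, hy1 i hi, add_zero],
             fun j hj => by rw [map_add, hx2 j hj, hy2 j hj, add_zero]⟩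
    · rintro c x - ⟨hx1, hx2⟩
      exact ⟨fun i hi => by rw [map_smul, hx1 i hi, smul_zero],
             fun j hj => by rw [map_smul, hx2 j hj, smul_zero]⟩
  · rintro ⟨h1, h2⟩
    have hv := bs.sum_repr v
    rw [Fintype.sum_sum_type] at hv
    rw [← hv]
    apply add_mem
    · apply sum_mem
      intro i _
      by_cases hik : (i : ℕ) < k
      · have : bs.repr v (inl i) = 0 := by
          have := h1 i hik
          rwa [C1, dif_pos i.isLt, Basis.coord_apply, Fin.eta] at this
        rw [this, zero_smul]
        exact zero_mem _
      · rw [hb1 i]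
        exact Submodule.smul_mem _ _ (pow_gen_mem_Dd₁ f u₁ u₂ hR0 (by omega) l)
    · apply sum_mem
      intro j _
      by_cases hjl : (j : ℕ) < l
      · have : bs.repr v (inr j) = 0 := by
          have := h2 j hjl
          rwa [C2, dif_pos j.isLt, Basis.coord_apply, Fin.eta] at this
        rw [this, zero_smul]
        exact zero_mem _
      · rw [hb2 j]
        exact Submodule.smul_mem _ _ (pow_gen_mem_Dd₂ f u₁ u₂ hS0 (by omega) k)

lemma Dd_mono {k k' l l' : ℕ} (hk : k' ≤ k) (hl : l' ≤ l) :
    Dd f u₁ u₂ k l ≤ Dd f u₁ u₂ k' l' := by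
  intro v hv
  rw [mem_Dd_iff bs f u₁ u₂ hb1 hb2 hR0 hS0] at hv ⊢
  exact ⟨fun i hi => hv.1 i (by omega), fun j hj => hv.2 j (by omega)⟩

lemma pow_mem_Dd (m : ℕ) {k l : ℕ} (v : V) (h : v ∈ Dd f u₁ u₂ k l) :
    (f ^ m) v ∈ Dd f u₁ u₂ (k + m) (l + m) := by
  rw [mem_Dd_iff bs f u₁ u₂ hb1 hb2 hR0 hS0] at h ⊢
  constructor
  · intro i hi
    by_cases him : i < m
    · exact C1_pow_lt bs f u₁ u₂ hb1 hb2 hR0 hS0 him v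
    · by_cases hiR : i < R
      · rw [C1_pow_ge bs f u₁ u₂ hb1 hb2 hR0 hS0 (by omega) hiR]
        exact h.1 _ (by omega)
      · exact C1_ge bs (by omega) _
  · intro j hj
    by_cases hjm : j < m
    · exact C2_pow_lt bs f u₁ u₂ hb1 hb2 hR0 hS0 hjm v
    · by_cases hjS : j < S
      · rw [C2_pow_ge bs f u₁ u₂ hb1 hb2 hR0 hS0 (by omega) hjS]
        exact h.2 _ (by omega)
      · exact C2_ge bs (by omega) _

lemma range_pow_eq (m : ℕ) : LinearMap.range (f ^ m) = Dd f u₁ u₂ m m := by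
  apply le_antisymm
  · rintro v ⟨w, rfl⟩
    rw [mem_Dd_iff bs f u₁ u₂ hb1 hb2 hR0 hS0]
    exact ⟨fun i hi => C1_pow_lt bs f u₁ u₂ hb1 hb2 hR0 hS0 hi w,
           fun j hj => C2_pow_lt bs f u₁ u₂ hb1 hb2 hR0 hS0 hj w⟩
  · apply sup_le
    · rw [cyc_le_iff]
      intro i
      rw [pow_pow, show i + m = m + i from Nat.add_comm i m, ← pow_pow]
      exact ⟨(f ^ i) u₁, rfl⟩
    · rw [cyc_le_iff]
      intro j
      rw [pow_pow, show j + m = m + j from Nat.add_comm j m, ← pow_pow]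
      exact ⟨(f ^ j) u₂, rfl⟩

lemma ker_pow_eq (m : ℕ) : LinearMap.ker (f ^ m) = Dd f u₁ u₂ (R - m) (S - m) := by
  apply le_antisymm
  · intro v hv
    have hv0 : (f ^ m) v = 0 := LinearMap.mem_ker.mp hv
    rw [mem_Dd_iff bs f u₁ u₂ hb1 hb2 hR0 hS0]
    constructor
    · intro i hi
      have h1 : C1 bs (i + m) ((f ^ m) v) = C1 bs i v := by
        rw [C1_pow_ge bs f u₁ u₂ hb1 hb2 hR0 hS0 (by omega) (by omega),
          show i + m - m = i from by omega]
      rw [← h1, hv0, map_zero]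
    · intro j hj
      have h2 : C2 bs (j + m) ((f ^ m) v) = C2 bs j v := by
        rw [C2_pow_ge bs f u₁ u₂ hb1 hb2 hR0 hS0 (by omega) (by omega),
          show j + m - m = j from by omega]
      rw [← h2, hv0, map_zero]
  · apply sup_le
    · rw [cyc_le_iff]
      intro i
      rw [LinearMap.mem_ker, pow_pow, pow_pow]
      exact pow_u₁_eq_zero bs f u₁ u₂ hb1 hb2 hR0 hS0 (by omega)
    · rw [cyc_le_iff]
      intro j
      rw [LinearMap.mem_ker, pow_pow, pow_pow]
      exact pow_u₂_eq_zero bs f u₁ u₂ hb1 hb2 hR0 hS0 (by omega)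

lemma Dd_inf (k l k' l' : ℕ) :
    Dd f u₁ u₂ k l ⊓ Dd f u₁ u₂ k' l' = Dd f u₁ u₂ (max k k') (max l l') := by
  apply le_antisymm
  · intro v hv
    rw [Submodule.mem_inf] at hv
    obtain ⟨h1, h2⟩ := hv
    rw [mem_Dd_iff bs f u₁ u₂ hb1 hb2 hR0 hS0] at h1
    rw [mem_Dd_iff bs f u₁ u₂ hb1 hb2 hR0 hS0] at h2
    rw [mem_Dd_iff bs f u₁ u₂ hb1 hb2 hR0 hS0]
    constructor
    · intro i hi
      rcases lt_max_iff.mp hi with h | h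
      · exact h1.1 i h
      · exact h2.1 i h
    · intro j hj
      rcases lt_max_iff.mp hj with h | h
      · exact h1.2 j h
      · exact h2.2 j h
  · exact le_inf (Dd_mono bs f u₁ u₂ hb1 hb2 hR0 hS0 (le_max_left _ _) (le_max_left _ _))
      (Dd_mono bs f u₁ u₂ hb1 hb2 hR0 hS0 (le_max_right _ _) (le_max_right _ _))

lemma comm_pow (g : V →ₗ[ZMod 2] V) (hg : ∀ v, g (f v) = f (g v)) :
    ∀ (m : ℕ) (w : V), g ((f ^ m) w) = (f ^ m) (g w) := by
  intro m
  induction m with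
  | zero => intro w; simp
  | succ m ih =>
    intro w
    rw [← pow_apply_succ, hg, ih, pow_apply_succ]

include hRS in
lemma hyperinv_Dd {k l : ℕ} (hkl : k ≤ l) (hlk : l ≤ k + (S - R)) :
    Hyperinv f (Dd f u₁ u₂ k l) := by
  intro g hg x hx
  have hgu₁ : g u₁ ∈ Dd f u₁ u₂ 0 (S - R) := by
    have : g u₁ ∈ LinearMap.ker (f ^ R) := by
      rw [LinearMap.mem_ker, ← comm_pow bs f u₁ u₂ hb1 hb2 hR0 hS0 g hg R u₁, hR0, map_zero]
    rw [ker_pow_eq bs f u₁ u₂ hb1 hb2 hR0 hS0, show R - R = 0 from by omega] at this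
    exact this
  have hgu₂ : g u₂ ∈ Dd f u₁ u₂ 0 0 := by
    rw [mem_Dd_iff bs f u₁ u₂ hb1 hb2 hR0 hS0]
    exact ⟨fun i hi => by omega, fun j hj => by omega⟩
  rw [Dd, cyc, cyc, ← Submodule.span_union] at hx
  refine Submodule.span_induction ?_ ?_ ?_ ?_ hx
  · rintro y (⟨i, rfl⟩ | ⟨j, rfl⟩)
    · dsimp only
      rw [pow_pow, comm_pow bs f u₁ u₂ hb1 hb2 hR0 hS0 g hg]
      refine Dd_mono bs f u₁ u₂ hb1 hb2 hR0 hS0 (k' := k) (l' := l) (by omega) (by omega)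
        (pow_mem_Dd bs f u₁ u₂ hb1 hb2 hR0 hS0 (i + k) _ hgu₁)
    · dsimp only
      rw [pow_pow, comm_pow bs f u₁ u₂ hb1 hb2 hR0 hS0 g hg]
      refine Dd_mono bs f u₁ u₂ hb1 hb2 hR0 hS0 (k' := k) (l' := l) (by omega) (by omega)
        (pow_mem_Dd bs f u₁ u₂ hb1 hb2 hR0 hS0 (j + l) _ hgu₂)
  · rw [map_zero]; exact zero_mem _
  · intro x y _ _ hx hy
    rw [map_add]; exact add_mem hx hy
  · intro c x _ hx
    rw [map_smul]; exact Submodule.smul_mem _ _ hx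

end Coord5

end Stmt10
namespace Stmt10

open Sum Submodule

set_option linter.unusedSectionVars false
set_option maxHeartbeats 1000000

variable {V : Type*} [AddCommGroup V] [Module (ZMod 2) V]

section Coord6

variable {R S : ℕ} (bs : Basis (Fin R ⊕ Fin S) (ZMod 2) V)
variable (f : V →ₗ[ZMod 2] V) (u₁ u₂ : V)
variable (hb1 : ∀ i : Fin R, bs (inl i) = (f ^ (i : ℕ)) u₁)
variable (hb2 : ∀ j : Fin S, bs (inr j) = (f ^ (j : ℕ)) u₂)
variable (hR0 : (f ^ R) u₁ = 0) (hS0 : (f ^ S) u₂ = 0) (hRS : R ≤ S)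

include hb1 hb2 hR0 hS0

omit hb1 hb2 hR0 hS0 in
lemma pow_mem_X (X : Submodule (ZMod 2) V) (hXf : ∀ x ∈ X, f x ∈ X) :
    ∀ (t : ℕ) (x : V), x ∈ X → (f ^ t) x ∈ X := by
  intro t
  induction t with
  | zero => intro x hx; simpa using hx
  | succ t ih =>
    intro x hx
    rw [← pow_apply_succ]
    exact hXf _ (ih x hx)

lemma tail1 (X : Submodule (ZMod 2) V) (hXf : ∀ x ∈ X, f x ∈ X) {m : ℕ} (hm : m < R)
    (w : V) (hw : w ∈ X) (hw1 : ∀ i < m, C1 bs i w = 0) (hwm : C1 bs m w = 1)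
    (hw2 : ∀ j, C2 bs j w = 0) : cyc f ((f ^ m) u₁) ≤ X := by
  have key : ∀ d m', R - m' ≤ d → m ≤ m' → (f ^ m') u₁ ∈ X := by
    intro d
    induction d with
    | zero =>
      intro m' h1 h2
      rw [pow_u₁_eq_zero bs f u₁ u₂ hb1 hb2 hR0 hS0 (by omega)]
      exact zero_mem _
    | succ d ih =>
      intro m' h1 h2
      by_cases hm' : m' < R
      · have hzX : (f ^ (m' - m)) w ∈ X := pow_mem_X f X hXf _ w hw
        set z := (f ^ (m' - m)) w with hz
        have hz1 : ∀ i < m', C1 bs i z = 0 := by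
          intro i hi
          by_cases hilt : i < m' - m
          · exact C1_pow_lt bs f u₁ u₂ hb1 hb2 hR0 hS0 hilt w
          · rw [hz, C1_pow_ge bs f u₁ u₂ hb1 hb2 hR0 hS0 (by omega) (by omega)]
            exact hw1 _ (by omega)
        have hzm : C1 bs m' z = 1 := by
          rw [hz, C1_pow_ge bs f u₁ u₂ hb1 hb2 hR0 hS0 (by omega) hm',
            show m' - (m' - m) = m from by omega]
          exact hwm
        have hz2 : ∀ j, C2 bs j z = 0 := by
          intro j
          by_cases hjS : j < S
          · by_cases hjlt : j < m' - m
            · exact C2_pow_lt bs f u₁ u₂ hb1 hb2 hR0 hS0 hjlt w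
            · rw [hz, C2_pow_ge bs f u₁ u₂ hb1 hb2 hR0 hS0 (by omega) hjS]
              exact hw2 _
          · exact C2_ge bs (by omega) _
        have hy : z - (f ^ m') u₁ ∈ Dd f u₁ u₂ (m' + 1) S := by
          rw [mem_Dd_iff bs f u₁ u₂ hb1 hb2 hR0 hS0]
          constructor
          · intro i hi
            rw [map_sub, C1_pow_u₁' bs f u₁ u₂ hb1 hb2 hR0 hS0]
            by_cases him : i = m'
            · rw [if_pos ⟨him, hm'⟩, him, hzm, sub_self]
            · rw [if_neg (by tauto), hz1 i (by omega), sub_zero]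
          · intro j hj
            rw [map_sub, C2_pow_u₁' bs f u₁ u₂ hb1 hb2 hR0 hS0, hz2 j, sub_zero]
        have hDX : Dd f u₁ u₂ (m' + 1) S ≤ X := by
          apply sup_le
          · rw [cyc_le_iff]
            intro i
            rw [pow_pow]
            exact ih (i + (m' + 1)) (by omega) (by omega)
          · rw [hS0, cyc_zero]
            exact bot_le
        have := sub_mem hzX (hDX hy)
        rwa [sub_sub_cancel] at this
      · rw [pow_u₁_eq_zero bs f u₁ u₂ hb1 hb2 hR0 hS0 (by omega)]
        exact zero_mem _
  rw [cyc_le_iff]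
  intro i
  rw [pow_pow]
  exact key R (i + m) (by omega) (by omega)

lemma tail2 (X : Submodule (ZMod 2) V) (hXf : ∀ x ∈ X, f x ∈ X) {m : ℕ} (hm : m < S)
    (w : V) (hw : w ∈ X) (hw1 : ∀ i, C1 bs i w = 0) (hw2 : ∀ j < m, C2 bs j w = 0)
    (hwm : C2 bs m w = 1) : cyc f ((f ^ m) u₂) ≤ X := by
  have key : ∀ d m', S - m' ≤ d → m ≤ m' → (f ^ m') u₂ ∈ X := by
    intro d
    induction d with
    | zero =>
      intro m' h1 h2
      rw [pow_u₂_eq_zero bs f u₁ u₂ hb1 hb2 hR0 hS0 (by omega)]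
      exact zero_mem _
    | succ d ih =>
      intro m' h1 h2
      by_cases hm' : m' < S
      · have hzX : (f ^ (m' - m)) w ∈ X := pow_mem_X f X hXf _ w hw
        set z := (f ^ (m' - m)) w with hz
        have hz2 : ∀ j < m', C2 bs j z = 0 := by
          intro j hj
          by_cases hjlt : j < m' - m
          · exact C2_pow_lt bs f u₁ u₂ hb1 hb2 hR0 hS0 hjlt w
          · rw [hz, C2_pow_ge bs f u₁ u₂ hb1 hb2 hR0 hS0 (by omega) (by omega)]
            exact hw2 _ (by omega)
        have hzm : C2 bs m' z = 1 := by
          rw [hz, C2_pow_ge bs f u₁ u₂ hb1 hb2 hR0 hS0 (by omega) hm',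
            show m' - (m' - m) = m from by omega]
          exact hwm
        have hz1 : ∀ i, C1 bs i z = 0 := by
          intro i
          by_cases hiR : i < R
          · by_cases hilt : i < m' - m
            · exact C1_pow_lt bs f u₁ u₂ hb1 hb2 hR0 hS0 hilt w
            · rw [hz, C1_pow_ge bs f u₁ u₂ hb1 hb2 hR0 hS0 (by omega) hiR]
              exact hw1 _
          · exact C1_ge bs (by omega) _
        have hy : z - (f ^ m') u₂ ∈ Dd f u₁ u₂ R (m' + 1) := by
          rw [mem_Dd_iff bs f u₁ u₂ hb1 hb2 hR0 hS0]
          constructor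
          · intro i hi
            rw [map_sub, C1_pow_u₂' bs f u₁ u₂ hb1 hb2 hR0 hS0, hz1 i, sub_zero]
          · intro j hj
            rw [map_sub, C2_pow_u₂' bs f u₁ u₂ hb1 hb2 hR0 hS0]
            by_cases hjm : j = m'
            · rw [if_pos ⟨hjm, hm'⟩, hjm, hzm, sub_self]
            · rw [if_neg (by tauto), hz2 j (by omega), sub_zero]
        have hDX : Dd f u₁ u₂ R (m' + 1) ≤ X := by
          apply sup_le
          · rw [hR0, cyc_zero]
            exact bot_le
          · rw [cyc_le_iff]
            intro j
            rw [pow_pow]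
            exact ih (j + (m' + 1)) (by omega) (by omega)
        have := sub_mem hzX (hDX hy)
        rwa [sub_sub_cancel] at this
      · rw [pow_u₂_eq_zero bs f u₁ u₂ hb1 hb2 hR0 hS0 (by omega)]
        exact zero_mem _
  rw [cyc_le_iff]
  intro j
  rw [pow_pow]
  exact key S (j + m) (by omega) (by omega)

end Coord6

end Stmt10
namespace Stmt10

open Sum Submodule

set_option linter.unusedSectionVars false
set_option maxHeartbeats 1000000

variable {V : Type*} [AddCommGroup V] [Module (ZMod 2) V]

lemma indep_cyc (f : V →ₗ[ZMod 2] V) (u : V) (R : ℕ) (hR0 : (f ^ R) u = 0)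
    (hR1 : ∀ m < R, (f ^ m) u ≠ 0) (g : Fin R → ZMod 2)
    (hg : ∑ i, g i • (f ^ (i : ℕ)) u = 0) : ∀ i, g i = 0 := by
  have hz : ∀ m, R ≤ m → (f ^ m) u = 0 := by
    intro m h
    rw [show f ^ m = f ^ (m - R) * f ^ R from by rw [← pow_add]; congr 1; omega,
      Module.End.mul_apply, hR0, map_zero]
  have key : ∀ n, ∀ i : Fin R, (i : ℕ) = n → g i = 0 := by
    intro n
    induction n using Nat.strong_induction_on with
    | _ n ih =>
      intro i hi
      have hiR := i.isLt
      have h0 : (f ^ (R - 1 - n)) (∑ j, g j • (f ^ (j : ℕ)) u) = 0 := by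
        rw [hg, map_zero]
      rw [map_sum] at h0
      have hterm : ∀ j : Fin R, j ≠ i → (f ^ (R - 1 - n)) (g j • (f ^ (j : ℕ)) u) = 0 := by
        intro j hji
        have hjn : (j : ℕ) ≠ n := by
          intro h
          exact hji (Fin.ext (by omega))
        rw [map_smul, pow_pow]
        by_cases hlt : (j : ℕ) < n
        · rw [ih _ hlt j rfl, zero_smul]
        · rw [hz _ (by omega), smul_zero]
      rw [Fintype.sum_eq_single i hterm, map_smul, pow_pow,
        show R - 1 - n + (i : ℕ) = R - 1 from by omega] at h0
      rcases smul_eq_zero.mp h0 with h | h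
      · exact h
      · exact absurd h (hR1 (R - 1) (by omega))
  intro i
  exact key (i : ℕ) i rfl

lemma exists_basis (f : V →ₗ[ZMod 2] V) (u₁ u₂ : V) (R S : ℕ)
    (hcompl : IsCompl (cyc f u₁) (cyc f u₂))
    (hR0 : (f ^ R) u₁ = 0) (hS0 : (f ^ S) u₂ = 0)
    (hR1 : ∀ m < R, (f ^ m) u₁ ≠ 0) (hS1 : ∀ m < S, (f ^ m) u₂ ≠ 0) :
    ∃ bs : Basis (Fin R ⊕ Fin S) (ZMod 2) V,
      (∀ i : Fin R, bs (inl i) = (f ^ (i : ℕ)) u₁) ∧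
      (∀ j : Fin S, bs (inr j) = (f ^ (j : ℕ)) u₂) := by
  set bv : Fin R ⊕ Fin S → V :=
    Sum.elim (fun i : Fin R => (f ^ (i : ℕ)) u₁) (fun j : Fin S => (f ^ (j : ℕ)) u₂) with hbv
  have hz1 : ∀ m, R ≤ m → (f ^ m) u₁ = 0 := by
    intro m h
    rw [show f ^ m = f ^ (m - R) * f ^ R from by rw [← pow_add]; congr 1; omega,
      Module.End.mul_apply, hR0, map_zero]
  have hz2 : ∀ m, S ≤ m → (f ^ m) u₂ = 0 := by
    intro m h
    rw [show f ^ m = f ^ (m - S) * f ^ S from by rw [← pow_add]; congr 1; omega,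
      Module.End.mul_apply, hS0, map_zero]
  have li : LinearIndependent (ZMod 2) bv := by
    rw [Fintype.linearIndependent_iff]
    intro g hg
    rw [Fintype.sum_sum_type] at hg
    set w1 := ∑ i : Fin R, g (inl i) • bv (inl i) with hw1
    set w2 := ∑ j : Fin S, g (inr j) • bv (inr j) with hw2
    have hw1m : w1 ∈ cyc f u₁ := by
      apply sum_mem
      intro i _
      exact Submodule.smul_mem _ _ (Submodule.subset_span ⟨(i : ℕ), rfl⟩)
    have hw2m : w2 ∈ cyc f u₂ := by
      apply sum_mem
      intro j _
      exact Submodule.smul_mem _ _ (Submodule.subset_span ⟨(j : ℕ), rfl⟩)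
    have hw10 : w1 = 0 := by
      have h1 : w1 = -w2 := by
        rw [eq_neg_iff_add_eq_zero]
        exact hg
      have : w1 ∈ cyc f u₁ ⊓ cyc f u₂ := ⟨hw1m, by rw [h1]; exact neg_mem hw2m⟩
      rwa [hcompl.inf_eq_bot, Submodule.mem_bot] at this
    have hw20 : w2 = 0 := by
      rw [hw10, zero_add] at hg
      exact hg
    have hg1 := indep_cyc f u₁ R hR0 hR1 (fun i => g (inl i)) hw10
    have hg2 := indep_cyc f u₂ S hS0 hS1 (fun j => g (inr j)) hw20
    rintro (i | j)
    · exact hg1 i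
    · exact hg2 j
  have sp : ⊤ ≤ Submodule.span (ZMod 2) (Set.range bv) := by
    rw [← hcompl.sup_eq_top]
    apply sup_le
    · apply Submodule.span_le.mpr
      rintro y ⟨i, rfl⟩
      dsimp only
      by_cases hi : i < R
      · exact Submodule.subset_span ⟨inl ⟨i, hi⟩, rfl⟩
      · rw [hz1 i (by omega)]
        exact zero_mem _
    · apply Submodule.span_le.mpr
      rintro y ⟨j, rfl⟩
      dsimp only
      by_cases hj : j < S
      · exact Submodule.subset_span ⟨inr ⟨j, hj⟩, rfl⟩
      · rw [hz2 j (by omega)]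
        exact zero_mem _
  refine ⟨Basis.mk li sp, fun i => ?_, fun j => ?_⟩
  · rw [Basis.mk_apply, hbv]
    rfl
  · rw [Basis.mk_apply, hbv]
    rfl

end Stmt10
open Sum Submodule Stmt10 in
set_option maxHeartbeats 4000000 in
theorem stmt10 (V : Type*) [AddCommGroup V] [Module (ZMod 2) V]
    [FiniteDimensional (ZMod 2) V] (f : V →ₗ[ZMod 2] V) (hf : IsNilpotent f)
    (u₁ u₂ : V) (R S : ℕ) (hcompl : IsCompl (cyc f u₁) (cyc f u₂))
    (he₁ : expnt f u₁ = R) (he₂ : expnt f u₂ = S) (hRS : R + 1 < S)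
    (X : Submodule (ZMod 2) V) (hX : Charinv f X) (hnh : ¬ Hyperinv f X) :
    ∃ s q : ℕ, 0 < s ∧ s < q ∧ s ≤ R ∧ (R : ℤ) - s < (S : ℤ) - q ∧
      X = charHull f {(f ^ (R - s)) u₁ + (f ^ (S - q)) u₂} ∧
      largestHyperinv f X =
        cyc f ((f ^ (R - s + 1)) u₁) ⊔ cyc f ((f ^ (S - q + 1)) u₂) ∧
      largestHyperinv f X =
        LinearMap.range (f ^ (R - s + 1)) ⊓ LinearMap.ker (f ^ (q - 1)) := by
  classical
  obtain ⟨N, hN⟩ := hf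
  have heq1 : sInf {ℓ : ℕ | (f ^ ℓ) u₁ = 0} = R := he₁
  have heq2 : sInf {ℓ : ℕ | (f ^ ℓ) u₂ = 0} = S := he₂
  have hR0 : (f ^ R) u₁ = 0 := by
    have h := Nat.sInf_mem (s := {ℓ : ℕ | (f ^ ℓ) u₁ = 0}) ⟨N, by simp [hN]⟩
    rw [heq1] at h
    exact h
  have hS0 : (f ^ S) u₂ = 0 := by
    have h := Nat.sInf_mem (s := {ℓ : ℕ | (f ^ ℓ) u₂ = 0}) ⟨N, by simp [hN]⟩
    rw [heq2] at h
    exact h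
  have hR1 : ∀ m < R, (f ^ m) u₁ ≠ 0 := by
    intro m hm
    exact Nat.notMem_of_lt_sInf (by rw [heq1]; exact hm)
  have hS1 : ∀ m < S, (f ^ m) u₂ ≠ 0 := by
    intro m hm
    exact Nat.notMem_of_lt_sInf (by rw [heq2]; exact hm)
  obtain ⟨bs, hb1, hb2⟩ := exists_basis f u₁ u₂ R S hcompl hR0 hS0 hR1 hS1
  have hRS' : R ≤ S := by omega
  have hSpos : 1 ≤ S := by omega
  have hXf := hX.1
  have hXpow : ∀ (t : ℕ) (x : V), x ∈ X → (f ^ t) x ∈ X := pow_mem_X f X hXf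
  -- shorthand for basic lemma instances
  have MD := mem_Dd_iff bs f u₁ u₂ hb1 hb2 hR0 hS0
  have PU1 := C1_pow_u₁' bs f u₁ u₂ hb1 hb2 hR0 hS0
  have PU12 := C2_pow_u₁' bs f u₁ u₂ hb1 hb2 hR0 hS0
  have PU21 := C1_pow_u₂' bs f u₁ u₂ hb1 hb2 hR0 hS0
  have PU2 := C2_pow_u₂' bs f u₁ u₂ hb1 hb2 hR0 hS0
  -- automorphisms
  have auto1 : ∀ k, 1 ≤ k → ∃ α : V ≃ₗ[ZMod 2] V, Commutes f α ∧
      ∀ v, α v = v + endo bs f ((f ^ k) u₁) 0 v := fun k hk =>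
    exists_auto f _
      (endo_comm bs f u₁ u₂ hb1 hb2 hR0 hS0 _ _ (endo_u₁pow_valid f u₁ k hR0) (map_zero _))
      S (n1_pow bs f u₁ u₂ hb1 hb2 hR0 hS0 k hk hRS' hSpos)
  have auto2 : ∀ k, 1 ≤ k → ∃ α : V ≃ₗ[ZMod 2] V, Commutes f α ∧
      ∀ v, α v = v + endo bs f 0 ((f ^ k) u₂) v := fun k hk =>
    exists_auto f _
      (endo_comm bs f u₁ u₂ hb1 hb2 hR0 hS0 _ _ (map_zero _) (endo_u₂pow_valid f u₂ k hS0))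
      S (n2_pow bs f u₁ u₂ hb1 hb2 hR0 hS0 k hk hSpos)
  have auto3 : ∃ α : V ≃ₗ[ZMod 2] V, Commutes f α ∧
      ∀ v, α v = v + endo bs f 0 u₁ v :=
    exists_auto f _
      (endo_comm bs f u₁ u₂ hb1 hb2 hR0 hS0 _ _ (map_zero _) (pow_u₁_S f u₁ hR0 hRS'))
      2 (n3_sq bs f u₁ u₂ hb1 hb2 hR0 hS0 hRS')
  have hw1n4 : (f ^ R) ((f ^ (S - R)) u₂) = 0 := by
    rw [pow_pow, show R + (S - R) = S from by omega]
    exact hS0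
  have auto4 : ∃ α : V ≃ₗ[ZMod 2] V, Commutes f α ∧
      ∀ v, α v = v + endo bs f ((f ^ (S - R)) u₂) 0 v :=
    exists_auto f _
      (endo_comm bs f u₁ u₂ hb1 hb2 hR0 hS0 _ _ hw1n4 (map_zero _))
      2 (n4_sq bs f u₁ u₂ hb1 hb2 hR0 hS0 hRS')
  have memn : ∀ (n : V →ₗ[ZMod 2] V) (α : V ≃ₗ[ZMod 2] V), Commutes f α →
      (∀ v, α v = v + n v) → ∀ v ∈ X, n v ∈ X := by
    intro n α hc hav v hv
    have h1 := hX.2 α hc v hv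
    rw [hav] at h1
    have h2 := sub_mem h1 hv
    rwa [add_sub_cancel_left] at h2
  by_cases hA : ∃ i, ∃ v, v ∈ X ∧ C1 bs i v ≠ 0
  · by_cases hB : ∃ j, ∃ v, v ∈ X ∧ C2 bs j v ≠ 0
    · -- both nonempty : the interesting case
      have hAne : {i : ℕ | ∃ v, v ∈ X ∧ C1 bs i v ≠ 0}.Nonempty := by
        obtain ⟨i0, v0, h1, h2⟩ := hA; exact ⟨i0, v0, h1, h2⟩
      have hBne : {j : ℕ | ∃ v, v ∈ X ∧ C2 bs j v ≠ 0}.Nonempty := by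
        obtain ⟨j0, v0, h1, h2⟩ := hB; exact ⟨j0, v0, h1, h2⟩
      set a := sInf {i : ℕ | ∃ v, v ∈ X ∧ C1 bs i v ≠ 0} with hadef
      set d := sInf {j : ℕ | ∃ v, v ∈ X ∧ C2 bs j v ≠ 0} with hddef
      obtain ⟨vA, hvAX, hvA⟩ := Nat.sInf_mem hAne
      obtain ⟨vB, hvBX, hvB⟩ := Nat.sInf_mem hBne
      have haR : a < R := by
        by_contra h
        exact hvA (C1_ge bs (by omega) vA)
      have hdS : d < S := by
        by_contra h
        exact hvB (C2_ge bs (by omega) vB)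
      have hlow1 : ∀ v ∈ X, ∀ i, i < a → C1 bs i v = 0 := by
        intro v hv i hi
        by_contra h
        have := Nat.sInf_le (s := {i : ℕ | ∃ v, v ∈ X ∧ C1 bs i v ≠ 0}) ⟨v, hv, h⟩
        omega
      have hlow2 : ∀ v ∈ X, ∀ j, j < d → C2 bs j v = 0 := by
        intro v hv j hj
        by_contra h
        have := Nat.sInf_le (s := {j : ℕ | ∃ v, v ∈ X ∧ C2 bs j v ≠ 0}) ⟨v, hv, h⟩
        omega
      have hvA1 : C1 bs a vA = 1 := zmod2_ne_zero hvA
      have hvB1 : C2 bs d vB = 1 := zmod2_ne_zero hvB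
      -- the tails are inside X
      have Hcyc1 : cyc f ((f ^ (a + 1)) u₁) ≤ X := by
        by_cases ha1 : a + 1 < R
        · obtain ⟨α1, hc1, hv1⟩ := auto1 1 le_rfl
          have hwX : endo bs f ((f ^ 1) u₁) 0 vA ∈ X := memn _ α1 hc1 hv1 vA hvAX
          refine tail1 bs f u₁ u₂ hb1 hb2 hR0 hS0 X hXf ha1 _ hwX ?_ ?_ ?_
          · intro i hi
            rcases Nat.eq_zero_or_pos i with h0 | h0
            · subst h0
              exact C1_n1_lt bs f u₁ u₂ hb1 hb2 hR0 hS0 1 (by omega) vA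
            · rw [C1_n1 bs f u₁ u₂ hb1 hb2 hR0 hS0 1 (by omega) (by omega)]
              exact hlow1 vA hvAX _ (by omega)
          · rw [C1_n1 bs f u₁ u₂ hb1 hb2 hR0 hS0 1 (by omega) ha1,
              show a + 1 - 1 = a from by omega]
            exact hvA1
          · intro j
            exact C2_n1 bs f u₁ u₂ hb1 hb2 hR0 hS0 1 j vA
        · rw [pow_u₁_eq_zero bs f u₁ u₂ hb1 hb2 hR0 hS0 (by omega), cyc_zero]
          exact bot_le
      have Hcyc2 : cyc f ((f ^ (d + 1)) u₂) ≤ X := by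
        by_cases hd1 : d + 1 < S
        · obtain ⟨α2, hc2, hv2⟩ := auto2 1 le_rfl
          have hwX : endo bs f 0 ((f ^ 1) u₂) vB ∈ X := memn _ α2 hc2 hv2 vB hvBX
          refine tail2 bs f u₁ u₂ hb1 hb2 hR0 hS0 X hXf hd1 _ hwX ?_ ?_ ?_
          · intro i
            exact C1_n2 bs f u₁ u₂ hb1 hb2 hR0 hS0 1 i vB
          · intro j hj
            rcases Nat.eq_zero_or_pos j with h0 | h0
            · subst h0
              exact C2_n2_lt bs f u₁ u₂ hb1 hb2 hR0 hS0 1 (by omega) vB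
            · rw [C2_n2 bs f u₁ u₂ hb1 hb2 hR0 hS0 1 (by omega) (by omega)]
              exact hlow2 vB hvBX _ (by omega)
          · rw [C2_n2 bs f u₁ u₂ hb1 hb2 hR0 hS0 1 (by omega) hd1,
              show d + 1 - 1 = d from by omega]
            exact hvB1
        · rw [pow_u₂_eq_zero bs f u₁ u₂ hb1 hb2 hR0 hS0 (by omega), cyc_zero]
          exact bot_le
      have HD : Dd f u₁ u₂ (a + 1) (d + 1) ≤ X := sup_le Hcyc1 Hcyc2
      by_cases hP10 : ∃ v, v ∈ X ∧ C1 bs a v ≠ 0 ∧ C2 bs d v = 0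
      · by_cases hP01 : ∃ v, v ∈ X ∧ C1 bs a v = 0 ∧ C2 bs d v ≠ 0
        · -- X = Dd a d, hyperinvariant : contradiction
          exfalso
          obtain ⟨w10, hw10X, hw10a, hw10d⟩ := hP10
          obtain ⟨w01, hw01X, hw01a, hw01d⟩ := hP01
          have hfu1X : (f ^ a) u₁ ∈ X := by
            have hmem : w10 - (f ^ a) u₁ ∈ Dd f u₁ u₂ (a + 1) (d + 1) := by
              rw [MD]
              constructor
              · intro i hi
                rw [map_sub, PU1]
                by_cases hia : i = a
                · rw [if_pos ⟨hia, haR⟩, hia, zmod2_ne_zero hw10a, sub_self]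
                · rw [if_neg (by tauto), hlow1 w10 hw10X i (by omega), sub_zero]
              · intro j hj
                rw [map_sub, PU12, sub_zero]
                by_cases hjd : j = d
                · rw [hjd]; exact hw10d
                · exact hlow2 w10 hw10X j (by omega)
            have := sub_mem hw10X (HD hmem)
            rwa [sub_sub_cancel] at this
          have hfu2X : (f ^ d) u₂ ∈ X := by
            have hmem : w01 - (f ^ d) u₂ ∈ Dd f u₁ u₂ (a + 1) (d + 1) := by
              rw [MD]
              constructor
              · intro i hi
                rw [map_sub, PU21, sub_zero]
                by_cases hia : i = a
                · rw [hia]; exact hw01a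
                · exact hlow1 w01 hw01X i (by omega)
              · intro j hj
                rw [map_sub, PU2]
                by_cases hjd : j = d
                · rw [if_pos ⟨hjd, hdS⟩, hjd, zmod2_ne_zero hw01d, sub_self]
                · rw [if_neg (by tauto), hlow2 w01 hw01X j (by omega), sub_zero]
            have := sub_mem hw01X (HD hmem)
            rwa [sub_sub_cancel] at this
          have hXD : X = Dd f u₁ u₂ a d := by
            apply le_antisymm
            · intro v hv
              rw [MD]
              exact ⟨fun i hi => hlow1 v hv i hi, fun j hj => hlow2 v hv j hj⟩
            · apply sup_le
              · rw [cyc_le_iff]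
                intro i
                cases i with
                | zero => simpa using hfu1X
                | succ i =>
                  rw [pow_pow]
                  have h : (f ^ (i + 1 + a)) u₁ = (f ^ i) ((f ^ (a + 1)) u₁) := by
                    rw [pow_pow, show i + (a + 1) = i + 1 + a from by omega]
                  rw [h]
                  exact Hcyc1 (Submodule.subset_span ⟨i, rfl⟩)
              · rw [cyc_le_iff]
                intro j
                cases j with
                | zero => simpa using hfu2X
                | succ j =>
                  rw [pow_pow]
                  have h : (f ^ (j + 1 + d)) u₂ = (f ^ j) ((f ^ (d + 1)) u₂) := by
                    rw [pow_pow, show j + (d + 1) = j + 1 + d from by omega]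
                  rw [h]
                  exact Hcyc2 (Submodule.subset_span ⟨j, rfl⟩)
          have had : a ≤ d := by
            by_cases hdR : d < R
            · obtain ⟨α3, hc3, hv3⟩ := auto3
              have h1 : endo bs f 0 u₁ ((f ^ d) u₂) ∈ X := memn _ α3 hc3 hv3 _ hfu2X
              have h2 : endo bs f 0 u₁ ((f ^ d) u₂) = (f ^ d) u₁ :=
                endo_pow_u₂ bs f u₁ u₂ hb1 hb2 hR0 hS0 0 u₁ (pow_u₁_S f u₁ hR0 hRS') d
              rw [h2] at h1
              have hmemA : d ∈ {i : ℕ | ∃ v, v ∈ X ∧ C1 bs i v ≠ 0} :=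
                ⟨(f ^ d) u₁, h1, by rw [PU1, if_pos ⟨rfl, hdR⟩]; exact one_ne_zero⟩
              have := Nat.sInf_le hmemA
              omega
            · omega
          have hdb : d ≤ a + (S - R) := by
            obtain ⟨α4, hc4, hv4⟩ := auto4
            have h1 : endo bs f ((f ^ (S - R)) u₂) 0 ((f ^ a) u₁) ∈ X :=
              memn _ α4 hc4 hv4 _ hfu1X
            have h2 : endo bs f ((f ^ (S - R)) u₂) 0 ((f ^ a) u₁) = (f ^ (a + (S - R))) u₂ := by
              rw [endo_pow_u₁ bs f u₁ u₂ hb1 hb2 hR0 hS0 _ 0 hw1n4 a, pow_pow]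
            rw [h2] at h1
            have hmemB : a + (S - R) ∈ {j : ℕ | ∃ v, v ∈ X ∧ C2 bs j v ≠ 0} :=
              ⟨(f ^ (a + (S - R))) u₂, h1, by
                rw [PU2, if_pos ⟨rfl, by omega⟩]; exact one_ne_zero⟩
            have := Nat.sInf_le hmemB
            omega
          exact hnh (by
            rw [hXD]
            exact hyperinv_Dd bs f u₁ u₂ hb1 hb2 hR0 hS0 hRS' had hdb)
        · -- hP10 and ¬hP01 : impossible
          exfalso
          by_cases h : C1 bs a vB = 0
          · exact hP01 ⟨vB, hvBX, h, hvB⟩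
          · obtain ⟨w10, hw10X, hw10a, hw10d⟩ := hP10
            refine hP01 ⟨vB - w10, sub_mem hvBX hw10X, ?_, ?_⟩
            · rw [map_sub, zmod2_ne_zero h, zmod2_ne_zero hw10a, sub_self]
            · rw [map_sub, hw10d, sub_zero]
              exact hvB
      · by_cases hP01 : ∃ v, v ∈ X ∧ C1 bs a v = 0 ∧ C2 bs d v ≠ 0
        · -- ¬hP10 and hP01 : impossible
          exfalso
          by_cases h : C2 bs d vA = 0
          · exact hP10 ⟨vA, hvAX, hvA, h⟩
          · obtain ⟨w01, hw01X, hw01a, hw01d⟩ := hP01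
            refine hP10 ⟨vA - w01, sub_mem hvAX hw01X, ?_, ?_⟩
            · rw [map_sub, hw01a, sub_zero]
              exact hvA
            · rw [map_sub, zmod2_ne_zero h, zmod2_ne_zero hw01d, sub_self]
        · -- MAIN CASE
          have hcoset : ∀ v ∈ X, C1 bs a v = C2 bs d v := by
            intro v hv
            by_cases h1 : C1 bs a v = 0 <;> by_cases h2 : C2 bs d v = 0
            · rw [h1, h2]
            · exact absurd ⟨v, hv, h1, h2⟩ hP01
            · exact absurd ⟨v, hv, h1, h2⟩ hP10
            · rw [zmod2_ne_zero h1, zmod2_ne_zero h2]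
          have hvAd1 : C2 bs d vA = 1 := by
            rw [← hcoset vA hvAX]
            exact hvA1
          have had : a ≤ d := by
            by_cases hdR : d < R
            · obtain ⟨α3, hc3, hv3⟩ := auto3
              have h1 : endo bs f 0 u₁ vA ∈ X := memn _ α3 hc3 hv3 vA hvAX
              have hmemA : d ∈ {i : ℕ | ∃ v, v ∈ X ∧ C1 bs i v ≠ 0} :=
                ⟨_, h1, by
                  rw [C1_n3 bs f u₁ u₂ hb1 hb2 hR0 hS0 hRS' hdR vA, hvAd1]
                  exact one_ne_zero⟩
              have := Nat.sInf_le hmemA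
              omega
            · omega
          have hane : a ≠ d := by
            intro he
            obtain ⟨α3, hc3, hv3⟩ := auto3
            have h1 : endo bs f 0 u₁ vA ∈ X := memn _ α3 hc3 hv3 vA hvAX
            refine hP10 ⟨_, h1, ?_, ?_⟩
            · rw [C1_n3 bs f u₁ u₂ hb1 hb2 hR0 hS0 hRS' haR vA, he, hvAd1]
              exact one_ne_zero
            · exact C2_n3 bs f u₁ u₂ hb1 hb2 hR0 hS0 hRS' d vA
          have hd4 : d ≤ a + (S - R) := by
            by_contra hgt
            push_neg at hgt
            obtain ⟨α4, hc4, hv4⟩ := auto4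
            have h1 : endo bs f ((f ^ (S - R)) u₂) 0 vA ∈ X := memn _ α4 hc4 hv4 vA hvAX
            have hmemB : a + (S - R) ∈ {j : ℕ | ∃ v, v ∈ X ∧ C2 bs j v ≠ 0} :=
              ⟨_, h1, by
                rw [C2_n4 bs f u₁ u₂ hb1 hb2 hR0 hS0 hRS' (by omega) vA,
                  show a + (S - R) - (S - R) = a from by omega, hvA1]
                exact one_ne_zero⟩
            have := Nat.sInf_le hmemB
            omega
          have hne4 : d ≠ a + (S - R) := by
            intro he
            obtain ⟨α4, hc4, hv4⟩ := auto4
            have h1 := hX.2 α4 hc4 vA hvAX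
            rw [hv4] at h1
            refine hP10 ⟨_, h1, ?_, ?_⟩
            · rw [map_add, hvA1, C1_n4 bs f u₁ u₂ hb1 hb2 hR0 hS0 a vA, add_zero]
              exact one_ne_zero
            · rw [map_add, hvAd1, C2_n4 bs f u₁ u₂ hb1 hb2 hR0 hS0 hRS' (by omega) vA,
                show d - (S - R) = a from by omega, hvA1]
              decide
          have hadlt : a < d := by omega
          have hdlt : d < a + (S - R) := by omega
          set x := (f ^ a) u₁ + (f ^ d) u₂ with hxdef
          have hxC1 : ∀ i, C1 bs i x = if i = a then 1 else 0 := by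
            intro i
            rw [hxdef, map_add, PU1, PU21, add_zero]
            by_cases hia : i = a
            · rw [if_pos ⟨hia, haR⟩, if_pos hia]
            · rw [if_neg (by tauto), if_neg hia]
          have hxC2 : ∀ j, C2 bs j x = if j = d then 1 else 0 := by
            intro j
            rw [hxdef, map_add, PU12, PU2, zero_add]
            by_cases hjd : j = d
            · rw [if_pos ⟨hjd, hdS⟩, if_pos hjd]
            · rw [if_neg (by tauto), if_neg hjd]
          have hxX : x ∈ X := by
            have hmem : vA - x ∈ Dd f u₁ u₂ (a + 1) (d + 1) := by
              rw [MD]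
              constructor
              · intro i hi
                rw [map_sub, hxC1]
                by_cases hia : i = a
                · rw [if_pos hia, hia, hvA1, sub_self]
                · rw [if_neg hia, hlow1 vA hvAX i (by omega), sub_zero]
              · intro j hj
                rw [map_sub, hxC2]
                by_cases hjd : j = d
                · rw [if_pos hjd, hjd, hvAd1, sub_self]
                · rw [if_neg hjd, hlow2 vA hvAX j (by omega), sub_zero]
            have := sub_mem hvAX (HD hmem)
            rwa [sub_sub_cancel] at this
          have hXeq : X = Dd f u₁ u₂ (a + 1) (d + 1) ⊔ Submodule.span (ZMod 2) {x} := by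
            apply le_antisymm
            · intro v hv
              by_cases h1 : C1 bs a v = 0
              · refine Submodule.mem_sup_left ?_
                rw [MD]
                constructor
                · intro i hi
                  by_cases hia : i = a
                  · rw [hia]; exact h1
                  · exact hlow1 v hv i (by omega)
                · intro j hj
                  by_cases hjd : j = d
                  · rw [hjd, ← hcoset v hv]; exact h1
                  · exact hlow2 v hv j (by omega)
              · have hv1 : C1 bs a v = 1 := zmod2_ne_zero h1
                have hv2 : C2 bs d v = 1 := by rw [← hcoset v hv]; exact hv1
                have hmem : v - x ∈ Dd f u₁ u₂ (a + 1) (d + 1) := by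
                  rw [MD]
                  constructor
                  · intro i hi
                    rw [map_sub, hxC1]
                    by_cases hia : i = a
                    · rw [if_pos hia, hia, hv1, sub_self]
                    · rw [if_neg hia, hlow1 v hv i (by omega), sub_zero]
                  · intro j hj
                    rw [map_sub, hxC2]
                    by_cases hjd : j = d
                    · rw [if_pos hjd, hjd, hv2, sub_self]
                    · rw [if_neg hjd, hlow2 v hv j (by omega), sub_zero]
                have hsplit : v = (v - x) + x := by rw [sub_add_cancel]
                rw [hsplit]
                exact Submodule.add_mem _ (Submodule.mem_sup_left hmem)
                  (Submodule.mem_sup_right (Submodule.mem_span_singleton_self x))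
            · apply sup_le HD
              rw [Submodule.span_le, Set.singleton_subset_iff]
              exact hxX
          have hx_hull : x ∈ charHull f {x} :=
            Submodule.subset_span ⟨x, rfl, 0, LinearEquiv.refl _ _, fun v => rfl, by simp⟩
          have hXhull : X = charHull f {x} := by
            apply le_antisymm
            · rw [hXeq]
              apply sup_le
              · apply sup_le
                · rw [cyc_le_iff]
                  intro i
                  rw [pow_pow]
                  obtain ⟨α, hc, hv⟩ := auto1 (1 + i) (by omega)
                  have hαx : α x ∈ charHull f {x} :=
                    Submodule.subset_span ⟨x, rfl, 0, α, hc, by simp⟩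
                  have hnx : endo bs f ((f ^ (1 + i)) u₁) 0 x = (f ^ (i + (a + 1))) u₁ := by
                    rw [hxdef, map_add,
                      endo_pow_u₁ bs f u₁ u₂ hb1 hb2 hR0 hS0 _ 0
                        (endo_u₁pow_valid f u₁ (1 + i) hR0) a,
                      endo_pow_u₂ bs f u₁ u₂ hb1 hb2 hR0 hS0 _ 0 (map_zero _) d,
                      map_zero, add_zero, pow_pow,
                      show a + (1 + i) = i + (a + 1) from by omega]
                  rw [show (f ^ (i + (a + 1))) u₁ = α x - x from by
                    rw [hv x, add_sub_cancel_left, hnx]]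
                  exact sub_mem hαx hx_hull
                · rw [cyc_le_iff]
                  intro j
                  rw [pow_pow]
                  obtain ⟨α, hc, hv⟩ := auto2 (1 + j) (by omega)
                  have hαx : α x ∈ charHull f {x} :=
                    Submodule.subset_span ⟨x, rfl, 0, α, hc, by simp⟩
                  have hnx : endo bs f 0 ((f ^ (1 + j)) u₂) x = (f ^ (j + (d + 1))) u₂ := by
                    rw [hxdef, map_add,
                      endo_pow_u₁ bs f u₁ u₂ hb1 hb2 hR0 hS0 0 _ (map_zero _) a,
                      endo_pow_u₂ bs f u₁ u₂ hb1 hb2 hR0 hS0 0 _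
                        (endo_u₂pow_valid f u₂ (1 + j) hS0) d,
                      map_zero, zero_add, pow_pow,
                      show d + (1 + j) = j + (d + 1) from by omega]
                  rw [show (f ^ (j + (d + 1))) u₂ = α x - x from by
                    rw [hv x, add_sub_cancel_left, hnx]]
                  exact sub_mem hαx hx_hull
              · rw [Submodule.span_le, Set.singleton_subset_iff]
                exact hx_hull
            · rw [charHull, Submodule.span_le]
              rintro y ⟨b0, hb0, i, α, hcα, rfl⟩
              rw [Set.mem_singleton_iff] at hb0
              subst hb0
              exact hXpow i _ (hX.2 α hcα x hxX)
          have hLH : largestHyperinv f X = Dd f u₁ u₂ (a + 1) (d + 1) := by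
            apply le_antisymm
            · apply sSup_le
              rintro W ⟨hWh, hWX⟩
              intro w hw
              have hwX := hWX hw
              have hw0 : C1 bs a w = 0 := by
                by_contra hc
                have hπc : ∀ v, endo bs f ((f ^ 0) u₁) 0 (f v) =
                    f (endo bs f ((f ^ 0) u₁) 0 v) :=
                  endo_comm bs f u₁ u₂ hb1 hb2 hR0 hS0 _ _
                    (endo_u₁pow_valid f u₁ 0 hR0) (map_zero _)
                have h1 : endo bs f ((f ^ 0) u₁) 0 w ∈ W := hWh _ hπc w hw
                refine hP10 ⟨_, hWX h1, ?_, ?_⟩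
                · rw [C1_n1 bs f u₁ u₂ hb1 hb2 hR0 hS0 0 (by omega) haR w, Nat.sub_zero]
                  exact hc
                · exact C2_n1 bs f u₁ u₂ hb1 hb2 hR0 hS0 0 d w
              rw [MD]
              constructor
              · intro i hi
                by_cases hia : i = a
                · rw [hia]; exact hw0
                · exact hlow1 w hwX i (by omega)
              · intro j hj
                by_cases hjd : j = d
                · rw [hjd, ← hcoset w hwX]; exact hw0
                · exact hlow2 w hwX j (by omega)
            · apply le_sSup
              exact ⟨hyperinv_Dd bs f u₁ u₂ hb1 hb2 hR0 hS0 hRS' (by omega) (by omega), HD⟩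
          refine ⟨R - a, S - d, by omega, by omega, by omega, by omega, ?_, ?_, ?_⟩
          · rw [show R - (R - a) = a from by omega, show S - (S - d) = d from by omega]
            exact hXhull
          · rw [show R - (R - a) = a from by omega, show S - (S - d) = d from by omega, hLH]
            rfl
          · rw [show R - (R - a) = a from by omega, hLH,
              range_pow_eq bs f u₁ u₂ hb1 hb2 hR0 hS0 (a + 1),
              ker_pow_eq bs f u₁ u₂ hb1 hb2 hR0 hS0 (S - d - 1),
              Dd_inf bs f u₁ u₂ hb1 hb2 hR0 hS0,
              show max (a + 1) (R - (S - d - 1)) = a + 1 from by omega,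
              show max (a + 1) (S - (S - d - 1)) = d + 1 from by omega]
    · -- A nonempty, B empty : contradiction via n4
      exfalso
      have hAne : {i : ℕ | ∃ v, v ∈ X ∧ C1 bs i v ≠ 0}.Nonempty := by
        obtain ⟨i0, v0, h1, h2⟩ := hA; exact ⟨i0, v0, h1, h2⟩
      set a := sInf {i : ℕ | ∃ v, v ∈ X ∧ C1 bs i v ≠ 0} with hadef
      obtain ⟨vA, hvAX, hvA⟩ := Nat.sInf_mem hAne
      have haR : a < R := by
        by_contra h
        exact hvA (C1_ge bs (by omega) vA)
      obtain ⟨α4, hc4, hv4⟩ := auto4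
      have h1 : endo bs f ((f ^ (S - R)) u₂) 0 vA ∈ X := memn _ α4 hc4 hv4 vA hvAX
      have h2 : C2 bs (a + (S - R)) (endo bs f ((f ^ (S - R)) u₂) 0 vA) = C1 bs a vA := by
        rw [C2_n4 bs f u₁ u₂ hb1 hb2 hR0 hS0 hRS' (by omega) vA,
          show a + (S - R) - (S - R) = a from by omega]
      exact hB ⟨a + (S - R), _, h1, by rw [h2]; exact hvA⟩
  · by_cases hB : ∃ j, ∃ v, v ∈ X ∧ C2 bs j v ≠ 0
    · -- A empty, B nonempty
      exfalso
      have hAz : ∀ v ∈ X, ∀ i, C1 bs i v = 0 := by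
        intro v hv i
        by_contra h
        exact hA ⟨i, v, hv, h⟩
      have hBne : {j : ℕ | ∃ v, v ∈ X ∧ C2 bs j v ≠ 0}.Nonempty := by
        obtain ⟨j0, v0, h1, h2⟩ := hB; exact ⟨j0, v0, h1, h2⟩
      set d := sInf {j : ℕ | ∃ v, v ∈ X ∧ C2 bs j v ≠ 0} with hddef
      obtain ⟨vB, hvBX, hvB⟩ := Nat.sInf_mem hBne
      have hdS : d < S := by
        by_contra h
        exact hvB (C2_ge bs (by omega) vB)
      have hlow2 : ∀ v ∈ X, ∀ j, j < d → C2 bs j v = 0 := by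
        intro v hv j hj
        by_contra h
        have := Nat.sInf_le (s := {j : ℕ | ∃ v, v ∈ X ∧ C2 bs j v ≠ 0}) ⟨v, hv, h⟩
        omega
      by_cases hdR : d < R
      · obtain ⟨α3, hc3, hv3⟩ := auto3
        have h1 : endo bs f 0 u₁ vB ∈ X := memn _ α3 hc3 hv3 vB hvBX
        have h2 : C1 bs d (endo bs f 0 u₁ vB) = C2 bs d vB :=
          C1_n3 bs f u₁ u₂ hb1 hb2 hR0 hS0 hRS' hdR vB
        exact hA ⟨d, _, h1, by rw [h2]; exact hvB⟩
      · have hXD : X = Dd f u₁ u₂ R d := by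
          apply le_antisymm
          · intro v hv
            rw [mem_Dd_iff bs f u₁ u₂ hb1 hb2 hR0 hS0]
            exact ⟨fun i hi => hAz v hv i, fun j hj => hlow2 v hv j hj⟩
          · apply sup_le
            · rw [hR0, cyc_zero]
              exact bot_le
            · exact tail2 bs f u₁ u₂ hb1 hb2 hR0 hS0 X hXf hdS vB hvBX
                (fun i => hAz vB hvBX i) (fun j hj => hlow2 vB hvBX j hj)
                (zmod2_ne_zero hvB)
        exact hnh (by
          rw [hXD]
          exact hyperinv_Dd bs f u₁ u₂ hb1 hb2 hR0 hS0 hRS' (by omega) (by omega))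
    · -- both empty : X = ⊥
      exfalso
      have hXbot : X = ⊥ := by
        rw [eq_bot_iff]
        intro v hv
        have hv0 : v = 0 := vec_eq_zero bs f u₁ u₂ hb1 hb2 hR0 hS0 v
          (fun i => by by_contra h; exact hA ⟨i, v, hv, h⟩)
          (fun j => by by_contra h; exact hB ⟨j, v, hv, h⟩)
        rw [hv0]
        exact zero_mem _
      refine hnh ?_
      rw [hXbot]
      intro g hg x hx
      rw [Submodule.mem_bot] at hx
      rw [hx, map_zero]
      exact zero_mem _
end

section
/- Let V be a finite-dimensional vector space over K = GF(2) and f : V → V nilpotent, with V = ⟨u_1⟩ ⊕ ⟨u_2⟩, e(u_1) = R, e(u_2) = S, and R + 1 < S. Let s, q be integers with 0 < s < q and 0 ≤ R − s < S − q, and set z = f^{R−s}(u_1) + f^{S−q}(u_2). Then X = ⟨z⟩^c is characteristic and not hyperinvariant, and X = ⟨z⟩ + ⟨f^{R−s+1}(u_1)⟩ + ⟨f^{S−q+1}(u_2)⟩. -/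
open Module LinearMap

section Aux
open Polynomial
variable {K V : Type*} [Field K] [AddCommGroup V] [Module K V] (f : V →ₗ[K] V)

lemma pow_aeval (k : ℕ) (p : K[X]) (u : V) :
    (f ^ k) ((aeval f p) u) = (aeval f (X ^ k * p)) u := by
  rw [map_mul, map_pow, aeval_X]; rfl

lemma aeval_pow_comm (p : K[X]) (k : ℕ) (v : V) :
    (f ^ k) ((aeval f p) v) = (aeval f p) ((f ^ k) v) := by
  rw [pow_aeval, mul_comm, map_mul, map_pow, aeval_X]; rfl

lemma mem_cyc_iff {u v : V} : v ∈ cyc f u ↔ ∃ p : K[X], v = (aeval f p) u := by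
  constructor
  · intro hv
    induction hv using Submodule.span_induction with
    | mem x hx => obtain ⟨i, rfl⟩ := hx; exact ⟨X ^ i, by rw [map_pow, aeval_X]⟩
    | zero => exact ⟨0, by simp⟩
    | add x y _ _ hx hy =>
        obtain ⟨p, rfl⟩ := hx; obtain ⟨q, rfl⟩ := hy; exact ⟨p + q, by simp⟩
    | smul c x _ hx => obtain ⟨p, rfl⟩ := hx; exact ⟨C c * p, by simp⟩
  · rintro ⟨p, rfl⟩
    have : (aeval f p) u = ∑ i ∈ Finset.range (p.natDegree + 1), p.coeff i • (f ^ i) u := by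
      rw [aeval_eq_sum_range, LinearMap.sum_apply]
      simp [LinearMap.smul_apply]
    rw [this]
    exact Submodule.sum_mem _ fun i _ =>
      Submodule.smul_mem _ _ (Submodule.subset_span ⟨i, rfl⟩)

lemma key1 (u : V) (e : ℕ) (he : 1 ≤ e) (hu : (f ^ e) u = 0) (p : K[X]) :
    (f ^ (e - 1)) ((aeval f p) u) = p.coeff 0 • (f ^ (e - 1)) u := by
  conv_lhs => rw [← p.divX_mul_X_add]
  rw [map_add, map_mul, aeval_X, aeval_C, LinearMap.add_apply]
  have h1 : (aeval f p.divX * f) u = (aeval f p.divX) (f u) := rfl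
  rw [h1, map_add, aeval_pow_comm]
  have h3 : (f ^ (e - 1)) (f u) = 0 := by
    have : (f ^ (e - 1)) (f u) = (f ^ e) u := by
      rw [← Module.End.mul_apply, ← pow_succ]
      congr 2
      omega
    rw [this, hu]
  rw [h3, map_zero, zero_add]
  simp [Module.algebraMap_end_apply]

lemma indep (u : V) (e : ℕ) (hu' : ∀ k < e, (f ^ k) u ≠ 0)
    (hue : (f ^ e) u = 0)
    (p : K[X]) (hp : (aeval f p) u = 0) : ∀ j < e, p.coeff j = 0 := by
  intro j
  induction j using Nat.strong_induction_on with
  | _ j ih =>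
    intro hj
    have hdvd : (X : K[X]) ^ j ∣ p :=
      X_pow_dvd_iff.mpr fun d hd => ih d hd (lt_trans hd hj)
    obtain ⟨p', rfl⟩ := hdvd
    have h0 : (f ^ (e - 1 - j)) ((aeval f (X ^ j * p')) u) = 0 := by rw [hp, map_zero]
    have h1 : (aeval f (X ^ j * p')) u = (f ^ j) ((aeval f p') u) := (pow_aeval f j p' u).symm
    rw [h1, ← Module.End.mul_apply, ← pow_add] at h0
    have hej : e - 1 - j + j = e - 1 := by omega
    rw [hej, key1 f u e (by omega) hue p'] at h0
    have hne : (f ^ (e - 1)) u ≠ 0 := hu' _ (by omega)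
    have h2 : p'.coeff 0 = 0 := by
      rcases smul_eq_zero.mp h0 with h | h
      · exact h
      · exact absurd h hne
    have : (X ^ j * p').coeff (0 + j) = 0 := by rw [coeff_X_pow_mul]; exact h2
    simpa using this

lemma commutes_pow (g : V →ₗ[K] V) (hg : ∀ v, g (f v) = f (g v)) (n : ℕ) (v : V) :
    g ((f ^ n) v) = (f ^ n) (g v) := by
  induction n generalizing v with
  | zero => simp
  | succ n ih =>
    rw [pow_succ, Module.End.mul_apply, Module.End.mul_apply, ih, hg]

lemma comm_aeval (g : V →ₗ[K] V) (hg : ∀ v, g (f v) = f (g v)) (p : K[X]) (v : V) :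
    g ((aeval f p) v) = (aeval f p) (g v) := by
  induction p using Polynomial.induction_on' with
  | add p q hp hq => simp [map_add, LinearMap.add_apply, hp, hq]
  | monomial n c =>
    rw [aeval_monomial]
    simp only [Module.End.mul_apply, Module.algebraMap_end_apply, map_smul]
    rw [commutes_pow f g hg]

lemma commutes_symm (α : V ≃ₗ[K] V) (h : Commutes f α) : Commutes f α.symm := by
  intro v
  apply α.injective
  rw [α.apply_symm_apply, h, α.apply_symm_apply]

lemma low_coeff_mem (p : K[X]) (m : ℕ) (hp : ∀ j < m, p.coeff j = 0) (u : V) :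
    (aeval f p) u ∈ cyc f ((f ^ m) u) := by
  obtain ⟨p', rfl⟩ := X_pow_dvd_iff.mpr hp
  rw [mul_comm, map_mul, map_pow, aeval_X]
  exact (mem_cyc_iff f).mpr ⟨p', rfl⟩

lemma cyc_f_inv {u x : V} (hx : x ∈ cyc f u) : f x ∈ cyc f u := by
  obtain ⟨p, rfl⟩ := (mem_cyc_iff f).mp hx
  refine (mem_cyc_iff f).mpr ⟨X * p, ?_⟩
  have := pow_aeval f 1 p u
  simpa using this

lemma coeff_X_pow_mul_lt (p : K[X]) (m j : ℕ) (hj : j < m) : ((X : K[X]) ^ m * p).coeff j = 0 :=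
  X_pow_dvd_iff.mp (Dvd.intro p rfl) j hj

lemma aeval_X_mul (p : K[X]) (u : V) : (aeval f (X * p)) u = f ((aeval f p) u) := by
  have := pow_aeval f 1 p u
  simpa using this.symm

lemma aeval_divX_apply (p : K[X]) (u : V) :
    (aeval f p) u = f ((aeval f p.divX) u) + p.coeff 0 • u := by
  conv_lhs => rw [← p.divX_mul_X_add]
  rw [map_add, map_mul, aeval_X, aeval_C, LinearMap.add_apply]
  have h1 : (aeval f p.divX * f) u = f ((aeval f p.divX) u) := by
    show (aeval f p.divX) (f u) = f ((aeval f p.divX) u)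
    have := aeval_pow_comm f p.divX 1 u
    simpa using this.symm
  have h2 : ((algebraMap K (V →ₗ[K] V)) (p.coeff 0)) u = p.coeff 0 • u := by
    simp [Module.algebraMap_end_apply]
  rw [h1, h2]

lemma charHull_charinv (B : Set V) : Charinv f (charHull f B) := by
  constructor
  · intro x hx
    induction hx using Submodule.span_induction with
    | mem y hy =>
        obtain ⟨b, hb, i, α, hα, rfl⟩ := hy
        refine Submodule.subset_span ⟨b, hb, i + 1, α, hα, ?_⟩
        rw [pow_succ', Module.End.mul_apply]
    | zero => simp
    | add x y _ _ hx hy => rw [map_add]; exact Submodule.add_mem _ hx hy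
    | smul c x _ hx => rw [map_smul]; exact Submodule.smul_mem _ _ hx
  · intro α hα x hx
    induction hx using Submodule.span_induction with
    | mem y hy =>
        obtain ⟨b, hb, i, β, hβ, rfl⟩ := hy
        refine Submodule.subset_span ⟨b, hb, i, β ≪≫ₗ α, ?_, ?_⟩
        · intro v
          simp only [LinearEquiv.trans_apply]
          rw [hβ v, hα _]
        · have h := commutes_pow f (α : V →ₗ[K] V) (fun w => hα w) i (β b)
          simpa using h
    | zero => simp
    | add x y _ _ hx hy => rw [map_add]; exact Submodule.add_mem _ hx hy
    | smul c x _ hx => rw [map_smul]; exact Submodule.smul_mem _ _ hx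

end Aux

theorem stmt11 (V : Type*) [AddCommGroup V] [Module (ZMod 2) V]
    [FiniteDimensional (ZMod 2) V] (f : V →ₗ[ZMod 2] V) (hf : IsNilpotent f)
    (u₁ u₂ : V) (R S : ℕ) (hcompl : IsCompl (cyc f u₁) (cyc f u₂))
    (he₁ : expnt f u₁ = R) (he₂ : expnt f u₂ = S) (hRS : R + 1 < S)
    (s q : ℕ) (hs : 0 < s) (hsq : s < q) (hsR : s ≤ R)
    (hlt : (R : ℤ) - s < (S : ℤ) - q) :
    Charinv f (charHull f {(f ^ (R - s)) u₁ + (f ^ (S - q)) u₂}) ∧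
      ¬ Hyperinv f (charHull f {(f ^ (R - s)) u₁ + (f ^ (S - q)) u₂}) ∧
      charHull f {(f ^ (R - s)) u₁ + (f ^ (S - q)) u₂} =
        cyc f ((f ^ (R - s)) u₁ + (f ^ (S - q)) u₂) ⊔
          cyc f ((f ^ (R - s + 1)) u₁) ⊔ cyc f ((f ^ (S - q + 1)) u₂) := by
  classical
  open Polynomial in
  obtain ⟨n₀, hn₀⟩ := hf
  have hfN : f ^ (n₀ + 1) = 0 := by rw [pow_succ, hn₀, zero_mul]
  -- exponent facts
  have hfR : (f ^ R) u₁ = 0 := by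
    have : R ∈ {ℓ : ℕ | (f ^ ℓ) u₁ = 0} := by
      rw [← he₁]
      exact Nat.sInf_mem ⟨n₀ + 1, show (f ^ (n₀+1)) u₁ = 0 by rw [hfN]; rfl⟩
    exact this
  have hfRne : ∀ k < R, (f ^ k) u₁ ≠ 0 := fun k hk =>
    Nat.notMem_of_lt_sInf (s := {ℓ : ℕ | (f ^ ℓ) u₁ = 0}) (hk.trans_eq he₁.symm)
  have hfS : (f ^ S) u₂ = 0 := by
    have : S ∈ {ℓ : ℕ | (f ^ ℓ) u₂ = 0} := by
      rw [← he₂]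
      exact Nat.sInf_mem ⟨n₀ + 1, show (f ^ (n₀+1)) u₂ = 0 by rw [hfN]; rfl⟩
    exact this
  have hfSne : ∀ k < S, (f ^ k) u₂ ≠ 0 := fun k hk =>
    Nat.notMem_of_lt_sInf (s := {ℓ : ℕ | (f ^ ℓ) u₂ = 0}) (hk.trans_eq he₂.symm)
  have hqS : q < S := by omega
  set r := R - s with hr
  set t := S - q with ht
  have hrt : r + 1 ≤ t := by omega
  have hrR : r < R := by omega
  have htS : t < S := by omega
  set z := (f ^ r) u₁ + (f ^ t) u₂ with hzdef
  -- decomposition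
  have hsup : cyc f u₁ ⊔ cyc f u₂ = ⊤ := hcompl.sup_eq_top
  have hdecomp : ∀ v : V, ∃ p₁ p₂ : (ZMod 2)[X], v = (aeval f p₁) u₁ + (aeval f p₂) u₂ := by
    intro v
    have hv : v ∈ cyc f u₁ ⊔ cyc f u₂ := by rw [hsup]; trivial
    obtain ⟨a, ha, b, hb, hab⟩ := Submodule.mem_sup.mp hv
    obtain ⟨p₁, rfl⟩ := (mem_cyc_iff f).mp ha
    obtain ⟨p₂, rfl⟩ := (mem_cyc_iff f).mp hb
    exact ⟨p₁, p₂, hab.symm⟩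
  have huniq : ∀ p₁ p₂ : (ZMod 2)[X], (aeval f p₁) u₁ + (aeval f p₂) u₂ = 0 →
      (aeval f p₁) u₁ = 0 ∧ (aeval f p₂) u₂ = 0 := by
    intro p₁ p₂ h
    have h1 : (aeval f p₁) u₁ ∈ cyc f u₂ := by
      have hh : (aeval f p₁) u₁ = -((aeval f p₂) u₂) := by
        rw [eq_neg_iff_add_eq_zero]; exact h
      rw [hh]
      exact Submodule.neg_mem _ ((mem_cyc_iff f).mpr ⟨p₂, rfl⟩)
    have h0 : (aeval f p₁) u₁ = 0 :=
      Submodule.disjoint_def.mp hcompl.disjoint _ ((mem_cyc_iff f).mpr ⟨p₁, rfl⟩) h1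
    exact ⟨h0, by rw [h0, zero_add] at h; exact h⟩
  -- projections
  set π₁ : V →ₗ[ZMod 2] V :=
    (cyc f u₁).subtype ∘ₗ (cyc f u₁).projectionOnto (cyc f u₂) hcompl with hπ₁def
  set π₂ : V →ₗ[ZMod 2] V :=
    (cyc f u₂).subtype ∘ₗ (cyc f u₂).projectionOnto (cyc f u₁) hcompl.symm with hπ₂def
  have hπ₁left : ∀ x ∈ cyc f u₁, π₁ x = x := by
    intro x hx
    show ((cyc f u₁).subtype) ((cyc f u₁).projectionOnto (cyc f u₂) hcompl x) = x
    rw [show x = ((⟨x, hx⟩ : cyc f u₁) : V) from rfl,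
      Submodule.projectionOnto_apply_left]
    rfl
  have hπ₁right : ∀ x ∈ cyc f u₂, π₁ x = 0 := by
    intro x hx
    show ((cyc f u₁).subtype) ((cyc f u₁).projectionOnto (cyc f u₂) hcompl x) = 0
    rw [Submodule.projectionOnto_apply_of_mem_right hcompl hx]
    rfl
  have hπ₂left : ∀ x ∈ cyc f u₂, π₂ x = x := by
    intro x hx
    show ((cyc f u₂).subtype) ((cyc f u₂).projectionOnto (cyc f u₁) hcompl.symm x) = x
    rw [show x = ((⟨x, hx⟩ : cyc f u₂) : V) from rfl,
      Submodule.projectionOnto_apply_left]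
    rfl
  have hπ₂right : ∀ x ∈ cyc f u₁, π₂ x = 0 := by
    intro x hx
    show ((cyc f u₂).subtype) ((cyc f u₂).projectionOnto (cyc f u₁) hcompl.symm x) = 0
    rw [Submodule.projectionOnto_apply_of_mem_right hcompl.symm hx]
    rfl
  have hmem₁ : ∀ p : (ZMod 2)[X], (aeval f p) u₁ ∈ cyc f u₁ := fun p => (mem_cyc_iff f).mpr ⟨p, rfl⟩
  have hmem₂ : ∀ p : (ZMod 2)[X], (aeval f p) u₂ ∈ cyc f u₂ := fun p => (mem_cyc_iff f).mpr ⟨p, rfl⟩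
  have hπ₁comm : ∀ v, π₁ (f v) = f (π₁ v) := by
    intro v
    obtain ⟨p₁, p₂, rfl⟩ := hdecomp v
    have e1 : π₁ ((aeval f p₁) u₁ + (aeval f p₂) u₂) = (aeval f p₁) u₁ := by
      rw [map_add, hπ₁left _ (hmem₁ p₁), hπ₁right _ (hmem₂ p₂), add_zero]
    have e2 : π₁ (f ((aeval f p₁) u₁ + (aeval f p₂) u₂)) = f ((aeval f p₁) u₁) := by
      rw [map_add, map_add, hπ₁left _ (cyc_f_inv f (hmem₁ p₁)),
        hπ₁right _ (cyc_f_inv f (hmem₂ p₂)), add_zero]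
    rw [e2, e1]
  have hπ₂comm : ∀ v, π₂ (f v) = f (π₂ v) := by
    intro v
    obtain ⟨p₁, p₂, rfl⟩ := hdecomp v
    have e1 : π₂ ((aeval f p₁) u₁ + (aeval f p₂) u₂) = (aeval f p₂) u₂ := by
      rw [map_add, hπ₂left _ (hmem₂ p₂), hπ₂right _ (hmem₁ p₁), zero_add]
    have e2 : π₂ (f ((aeval f p₁) u₁ + (aeval f p₂) u₂)) = f ((aeval f p₂) u₂) := by
      rw [map_add, map_add, hπ₂left _ (cyc_f_inv f (hmem₂ p₂)),
        hπ₂right _ (cyc_f_inv f (hmem₁ p₁)), zero_add]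
    rw [e2, e1]
  -- building unit automorphisms 1 + f g for idempotent commuting g
  have mk_unit : ∀ g : V →ₗ[ZMod 2] V, (∀ v, g (f v) = f (g v)) → (∀ v, g (g v) = g v) →
      ∃ α : V ≃ₗ[ZMod 2] V, Commutes f α ∧ ∀ v, α v = v + f (g v) := by
    intro g hgf hgg
    have hgf' : g * f = f * g := LinearMap.ext hgf
    have hgg' : g * g = g := LinearMap.ext hgg
    have hpow : ∀ k : ℕ, (f * g) ^ (k + 1) = f ^ (k + 1) * g := by
      intro k
      induction k with
      | zero => simp
      | succ k ih =>
        rw [pow_succ, ih, pow_succ]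
        rw [mul_assoc, ← mul_assoc g f g, hgf', mul_assoc f g g, hgg', ← mul_assoc,
          pow_succ, pow_succ]
    have hnil : IsNilpotent (f * g) := ⟨n₀ + 1, by rw [hpow n₀, hfN, zero_mul]⟩
    have hunit : IsUnit (1 + f * g) := IsNilpotent.isUnit_one_add hnil
    have hbij : Function.Bijective (1 + f * g : V →ₗ[ZMod 2] V) :=
      (Module.End.isUnit_iff _).mp hunit
    refine ⟨LinearEquiv.ofBijective (1 + f * g) hbij, ?_, ?_⟩
    · intro v
      show (1 + f * g) (f v) = f ((1 + f * g) v)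
      simp only [LinearMap.add_apply, Module.End.mul_apply, Module.End.one_apply, map_add]
      rw [hgf]
    · intro v
      show (1 + f * g) v = v + f (g v)
      simp only [LinearMap.add_apply, Module.End.mul_apply, Module.End.one_apply]
  have hπ₁idem : ∀ v, π₁ (π₁ v) = π₁ v := by
    intro v
    refine hπ₁left _ ?_
    exact Submodule.coe_mem _
  have hπ₂idem : ∀ v, π₂ (π₂ v) = π₂ v := by
    intro v
    exact hπ₂left _ (Submodule.coe_mem _)
  obtain ⟨α₁, hα₁c, hα₁v⟩ := mk_unit π₁ hπ₁comm hπ₁idem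
  obtain ⟨α₂, hα₂c, hα₂v⟩ := mk_unit π₂ hπ₂comm hπ₂idem
  have hfr₁ : (f ^ r) u₁ ∈ cyc f u₁ := Submodule.subset_span ⟨r, rfl⟩
  have hft₂ : (f ^ t) u₂ ∈ cyc f u₂ := Submodule.subset_span ⟨t, rfl⟩
  have hπ₁z : π₁ z = (f ^ r) u₁ := by
    rw [hzdef, map_add, hπ₁left _ hfr₁, hπ₁right _ hft₂, add_zero]
  have hπ₂z : π₂ z = (f ^ t) u₂ := by
    rw [hzdef, map_add, hπ₂left _ hft₂, hπ₂right _ hfr₁, zero_add]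
  have hα₁z : α₁ z = z + (f ^ (r + 1)) u₁ := by
    rw [hα₁v z, hπ₁z, pow_succ', Module.End.mul_apply]
  have hα₂z : α₂ z = z + (f ^ (t + 1)) u₂ := by
    rw [hα₂v z, hπ₂z, pow_succ', Module.End.mul_apply]
  -- the RHS subspace
  set Y := cyc f z ⊔ cyc f ((f ^ (r + 1)) u₁) ⊔ cyc f ((f ^ (t + 1)) u₂) with hYdef
  have le₁ : cyc f z ≤ Y := le_trans le_sup_left le_sup_left
  have le₂ : cyc f ((f ^ (r + 1)) u₁) ≤ Y := le_trans le_sup_right le_sup_left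
  have le₃ : cyc f ((f ^ (t + 1)) u₂) ≤ Y := le_sup_right
  have hrefl : Commutes f (LinearEquiv.refl (ZMod 2) V) := fun v => rfl
  have hXgen : ∀ (i : ℕ) (α : V ≃ₗ[ZMod 2] V), Commutes f α →
      (f ^ i) (α z) ∈ charHull f {z} :=
    fun i α hα => Submodule.subset_span ⟨z, Set.mem_singleton z, i, α, hα, rfl⟩
  have hzX : z ∈ charHull f {z} := by
    have := hXgen 0 (LinearEquiv.refl (ZMod 2) V) hrefl
    simpa using this
  have hsub1 : cyc f z ≤ charHull f {z} := by
    apply Submodule.span_le.mpr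
    rintro y ⟨i, rfl⟩
    have := hXgen i (LinearEquiv.refl (ZMod 2) V) hrefl
    simpa using this
  have hsub2 : cyc f ((f ^ (r + 1)) u₁) ≤ charHull f {z} := by
    apply Submodule.span_le.mpr
    rintro y ⟨i, rfl⟩
    have h1 := hXgen i α₁ hα₁c
    have h2 := hXgen i (LinearEquiv.refl (ZMod 2) V) hrefl
    simp only [LinearEquiv.refl_apply] at h2
    have heq : (fun i => (f ^ i) ((f ^ (r + 1)) u₁)) i = (f ^ i) (α₁ z) - (f ^ i) z := by
      show (f ^ i) ((f ^ (r + 1)) u₁) = (f ^ i) (α₁ z) - (f ^ i) z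
      rw [hα₁z, map_add]
      abel
    rw [heq]
    exact Submodule.sub_mem _ h1 h2
  have hsub3 : cyc f ((f ^ (t + 1)) u₂) ≤ charHull f {z} := by
    apply Submodule.span_le.mpr
    rintro y ⟨i, rfl⟩
    have h1 := hXgen i α₂ hα₂c
    have h2 := hXgen i (LinearEquiv.refl (ZMod 2) V) hrefl
    simp only [LinearEquiv.refl_apply] at h2
    have heq : (fun i => (f ^ i) ((f ^ (t + 1)) u₂)) i = (f ^ i) (α₂ z) - (f ^ i) z := by
      show (f ^ i) ((f ^ (t + 1)) u₂) = (f ^ i) (α₂ z) - (f ^ i) z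
      rw [hα₂z, map_add]
      abel
    rw [heq]
    exact Submodule.sub_mem _ h1 h2
  -- the core computation: images of z under commuting automorphisms lie in Y
  have hαpow : ∀ (α : V ≃ₗ[ZMod 2] V), Commutes f α → ∀ (n : ℕ) (v : V),
      α ((f ^ n) v) = (f ^ n) (α v) := by
    intro α hα n v
    have := commutes_pow f (α : V →ₗ[ZMod 2] V) (fun w => hα w) n v
    simpa using this
  have hz2 : ∀ c : ZMod 2, c ≠ 0 → c = 1 := by decide
  have hcore : ∀ α : V ≃ₗ[ZMod 2] V, Commutes f α → α z ∈ Y := by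
    intro α hα
    obtain ⟨a, b, hab⟩ := hdecomp (α u₁)
    obtain ⟨c, d, hcd⟩ := hdecomp (α u₂)
    -- the coefficients of b below S - R vanish
    have hbR : (aeval f ((X : (ZMod 2)[X]) ^ R * b)) u₂ = 0 := by
      have h1 : (f ^ R) (α u₁) = 0 := by rw [← hαpow α hα R u₁, hfR, map_zero]
      rw [hab, map_add, pow_aeval, pow_aeval] at h1
      exact (huniq _ _ h1).2
    have hblow : ∀ j < S - R, b.coeff j = 0 := by
      intro j hj
      have h := indep f u₂ S hfSne hfS _ hbR (j + R) (by omega)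
      rwa [coeff_X_pow_mul] at h
    -- a.coeff 0 = 1
    have ha0 : a.coeff 0 = 1 := by
      refine hz2 _ ?_
      intro ha0'
      have hb0 : b.coeff 0 = 0 := hblow 0 (by omega)
      have hw : α u₁ = f ((aeval f a.divX) u₁ + (aeval f b.divX) u₂) := by
        rw [hab, aeval_divX_apply f a u₁, aeval_divX_apply f b u₂, ha0', hb0, zero_smul,
          zero_smul, add_zero, add_zero, ← map_add]
      have hu₁' : u₁ = f (α.symm ((aeval f a.divX) u₁ + (aeval f b.divX) u₂)) := by
        calc u₁ = α.symm (α u₁) := (α.symm_apply_apply u₁).symm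
        _ = α.symm (f ((aeval f a.divX) u₁ + (aeval f b.divX) u₂)) := by rw [hw]
        _ = f (α.symm ((aeval f a.divX) u₁ + (aeval f b.divX) u₂)) := commutes_symm f α hα _
      obtain ⟨p₁, p₂, hp⟩ := hdecomp (α.symm ((aeval f a.divX) u₁ + (aeval f b.divX) u₂))
      have hkey : (aeval f (1 - X * p₁)) u₁ + (aeval f (-(X * p₂))) u₂ = 0 := by
        have hthis : u₁ = f ((aeval f p₁) u₁) + f ((aeval f p₂) u₂) := by
          conv_lhs => rw [hu₁', hp]
          rw [map_add]
        rw [map_sub, map_one, map_neg]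
        simp only [LinearMap.sub_apply, Module.End.one_apply, LinearMap.neg_apply]
        rw [aeval_X_mul, aeval_X_mul]
        set A := f ((aeval f p₁) u₁) with hA
        set B := f ((aeval f p₂) u₂) with hB
        rw [hthis]
        abel
      have h0 := (huniq _ _ hkey).1
      have hc := indep f u₁ R hfRne hfR _ h0 0 (by omega)
      rw [coeff_sub, coeff_one_zero, mul_coeff_zero, coeff_X_zero, zero_mul, sub_zero] at hc
      exact one_ne_zero hc
    -- d.coeff 0 = 1
    have hd0 : d.coeff 0 = 1 := by
      refine hz2 _ ?_
      intro hd0'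
      have hS1 : (f ^ (S - 1)) u₂ ≠ 0 := hfSne _ (by omega)
      apply hS1
      have hα0 : α ((f ^ (S - 1)) u₂) = 0 := by
        rw [hαpow α hα, hcd, map_add, pow_aeval, pow_aeval]
        have h1 : (aeval f ((X : (ZMod 2)[X]) ^ (S - 1) * c)) u₁ = 0 := by
          rw [mul_comm, map_mul, map_pow, aeval_X]
          have hfS1 : (f ^ (S - 1)) u₁ = 0 := by
            have he : (f ^ (S - 1)) u₁ = (f ^ (S - 1 - R)) ((f ^ R) u₁) := by
              rw [← Module.End.mul_apply, ← pow_add]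
              congr 2
              omega
            rw [he, hfR, map_zero]
          show (aeval f c) ((f ^ (S - 1)) u₁) = 0
          rw [hfS1, map_zero]
        have h2 : (aeval f ((X : (ZMod 2)[X]) ^ (S - 1) * d)) u₂ = 0 := by
          rw [← pow_aeval, aeval_divX_apply f d u₂, hd0', zero_smul, add_zero]
          have he2 : (f ^ (S - 1)) (f ((aeval f d.divX) u₂)) = (f ^ S) ((aeval f d.divX) u₂) := by
            rw [← Module.End.mul_apply, ← pow_succ]
            congr 2
            omega
          rw [he2, aeval_pow_comm, hfS, map_zero]
        rw [h1, h2, add_zero]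
      have := α.injective (by rw [hα0, map_zero] : α ((f ^ (S - 1)) u₂) = α 0)
      exact this
    -- assemble
    have ha' : a = X * a.divX + 1 := by
      conv_lhs => rw [← a.divX_mul_X_add, ha0, map_one]
      ring
    have hd' : d = X * d.divX + 1 := by
      conv_lhs => rw [← d.divX_mul_X_add, hd0, map_one]
      ring
    have hαz : α z = z + ((aeval f (X ^ (r + 1) * a.divX)) u₁ + (aeval f (X ^ t * c)) u₁)
        + ((aeval f (X ^ r * b)) u₂ + (aeval f (X ^ (t + 1) * d.divX)) u₂) := by
      have h1 : α z = (aeval f (X ^ r * a)) u₁ + (aeval f (X ^ r * b)) u₂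
          + ((aeval f (X ^ t * c)) u₁ + (aeval f (X ^ t * d)) u₂) := by
        rw [hzdef, map_add, hαpow α hα, hαpow α hα, hab, hcd, map_add, map_add,
          pow_aeval, pow_aeval, pow_aeval, pow_aeval]
      have h2 : (aeval f (X ^ r * a)) u₁ = (f ^ r) u₁ + (aeval f (X ^ (r + 1) * a.divX)) u₁ := by
        have he : (X : (ZMod 2)[X]) ^ r * a = X ^ r + X ^ (r + 1) * a.divX := by
          conv_lhs => rw [ha']
          ring
        rw [he, map_add, LinearMap.add_apply, map_pow, aeval_X]
      have h3 : (aeval f (X ^ t * d)) u₂ = (f ^ t) u₂ + (aeval f (X ^ (t + 1) * d.divX)) u₂ := by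
        have he : (X : (ZMod 2)[X]) ^ t * d = X ^ t + X ^ (t + 1) * d.divX := by
          conv_lhs => rw [hd']
          ring
        rw [he, map_add, LinearMap.add_apply, map_pow, aeval_X]
      rw [h1, h2, h3, hzdef]
      abel
    rw [hαz]
    refine add_mem (add_mem (le₁ ?_) (add_mem (le₂ ?_) (le₂ ?_))) (add_mem (le₃ ?_) (le₃ ?_))
    · exact Submodule.subset_span ⟨0, by simp⟩
    · exact low_coeff_mem f _ (r + 1) (fun j hj => coeff_X_pow_mul_lt _ _ _ hj) u₁
    · exact low_coeff_mem f _ (r + 1)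
        (fun j hj => coeff_X_pow_mul_lt _ _ _ (lt_of_lt_of_le hj (by omega))) u₁
    · refine low_coeff_mem f _ (t + 1) (fun j hj => ?_) u₂
      by_cases hjr : j < r
      · exact coeff_X_pow_mul_lt _ _ _ hjr
      · have hj' : j = (j - r) + r := by omega
        rw [hj', coeff_X_pow_mul]
        exact hblow _ (by omega)
    · exact low_coeff_mem f _ (t + 1) (fun j hj => coeff_X_pow_mul_lt _ _ _ hj) u₂
  -- Y is invariant under f and its powers
  have hYinv : ∀ x ∈ Y, f x ∈ Y := by
    intro x hx
    obtain ⟨y, hy, w3, hw3, rfl⟩ := Submodule.mem_sup.mp hx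
    obtain ⟨w1, hw1, w2, hw2, rfl⟩ := Submodule.mem_sup.mp hy
    rw [map_add, map_add]
    exact add_mem (add_mem (le₁ (cyc_f_inv f hw1)) (le₂ (cyc_f_inv f hw2)))
      (le₃ (cyc_f_inv f hw3))
  have hYpow : ∀ (i : ℕ) (x : V), x ∈ Y → (f ^ i) x ∈ Y := by
    intro i
    induction i with
    | zero => intro x hx; simpa using hx
    | succ i ih =>
      intro x hx
      rw [pow_succ', Module.End.mul_apply]
      exact hYinv _ (ih x hx)
  have hle : charHull f {z} ≤ Y := by
    apply Submodule.span_le.mpr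
    rintro y ⟨b0, hb0, i, α, hα, rfl⟩
    rw [Set.mem_singleton_iff.mp hb0]
    exact hYpow i _ (hcore α hα)
  have hXeq : charHull f {z} = Y :=
    le_antisymm hle (sup_le (sup_le hsub1 hsub2) hsub3)
  refine ⟨charHull_charinv f _, ?_, hXeq⟩
  -- not hyperinvariant
  intro hH
  have hgz := hH π₁ hπ₁comm z hzX
  rw [hπ₁z, hXeq] at hgz
  obtain ⟨y, hy, w3, hw3, hsum⟩ := Submodule.mem_sup.mp hgz
  obtain ⟨w1, hw1, w2, hw2, rfl⟩ := Submodule.mem_sup.mp hy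
  obtain ⟨p, hp⟩ := (mem_cyc_iff f).mp hw1
  obtain ⟨p₁, hp₁⟩ := (mem_cyc_iff f).mp hw2
  obtain ⟨p₂, hp₂⟩ := (mem_cyc_iff f).mp hw3
  have hw1' : w1 = (aeval f (X ^ r * p)) u₁ + (aeval f (X ^ t * p)) u₂ := by
    rw [hp, hzdef, map_add, ← aeval_pow_comm, ← aeval_pow_comm, pow_aeval, pow_aeval]
  have hw2' : w2 = (aeval f (X ^ (r + 1) * p₁)) u₁ := by
    rw [hp₁, ← aeval_pow_comm, pow_aeval]
  have hw3' : w3 = (aeval f (X ^ (t + 1) * p₂)) u₂ := by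
    rw [hp₂, ← aeval_pow_comm, pow_aeval]
  have hmain : (aeval f (X ^ r - (X ^ r * p + X ^ (r + 1) * p₁))) u₁
      + (aeval f (-(X ^ t * p + X ^ (t + 1) * p₂))) u₂ = 0 := by
    rw [map_sub, map_add, map_neg, map_add]
    simp only [LinearMap.sub_apply, LinearMap.add_apply, LinearMap.neg_apply]
    rw [map_pow, aeval_X]
    rw [hw1', hw2', hw3'] at hsum
    set A1 := (aeval f (X ^ r * p)) u₁ with hA1
    set A2 := (aeval f (X ^ t * p)) u₂ with hA2
    set A3 := (aeval f (X ^ (r + 1) * p₁)) u₁ with hA3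
    set A4 := (aeval f (X ^ (t + 1) * p₂)) u₂ with hA4
    rw [← hsum]
    abel
  have h1 := (huniq _ _ hmain).1
  have h2 := (huniq _ _ hmain).2
  have hp0 : p.coeff 0 = 0 := by
    have hc := indep f u₂ S hfSne hfS _ h2 t htS
    have e1 : ((X : (ZMod 2)[X]) ^ t * p).coeff t = p.coeff 0 := by
      simpa using coeff_X_pow_mul p t 0
    have e2 : ((X : (ZMod 2)[X]) ^ (t + 1) * p₂).coeff t = 0 :=
      coeff_X_pow_mul_lt _ _ _ (by omega)
    rw [coeff_neg, coeff_add, e1, e2, add_zero, neg_eq_zero] at hc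
    exact hc
  have hcontr := indep f u₁ R hfRne hfR _ h1 r hrR
  have e1 : ((X : (ZMod 2)[X]) ^ r * p).coeff r = p.coeff 0 := by
    simpa using coeff_X_pow_mul p r 0
  have e2 : ((X : (ZMod 2)[X]) ^ (r + 1) * p₁).coeff r = 0 :=
    coeff_X_pow_mul_lt _ _ _ (by omega)
  have e3 : ((X : (ZMod 2)[X]) ^ r).coeff r = 1 := by simp
  rw [coeff_sub, coeff_add, e1, e2, e3, hp0, add_zero, sub_zero] at hcontr
  exact one_ne_zero hcontr
end

section
/- Let V_1 and V_2 be f-invariant subspaces of V with V = V_1 ⊕ V_2. Then a subspace X ⊆ V is hyperinvariant (with respect to f) if and only if X is characteristic (with respect to f), X = (X ∩ V_1) ⊕ (X ∩ V_2), and for i = 1, 2 the subspace X ∩ V_i is hyperinvariant in V_i with respect to the restriction f|_{V_i}. -/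
open Module LinearMap

section Aux

variable {K V : Type*} [Field K] [AddCommGroup V] [Module K V]

/-- The projection onto `V₁` along `V₂` commutes with `f` when both are `f`-invariant. -/
lemma proj_comm (f : V →ₗ[K] V) {V₁ V₂ : Submodule K V}
    (hV₁ : ∀ x ∈ V₁, f x ∈ V₁) (hV₂ : ∀ x ∈ V₂, f x ∈ V₂)
    (hcompl : IsCompl V₁ V₂) (v : V) :
    (V₁.subtype ∘ₗ V₁.projectionOnto V₂ hcompl) (f v) =
      f ((V₁.subtype ∘ₗ V₁.projectionOnto V₂ hcompl) v) := by
  set pr₁ := V₁.projectionOnto V₂ hcompl with hpr₁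
  set pr₂ := V₂.projectionOnto V₁ hcompl.symm with hpr₂
  have hsum : (pr₁ v : V) + (pr₂ v : V) = v :=
    Submodule.projection_add_projection_eq_self hcompl v
  have h1 : pr₁ (f (pr₁ v : V)) = ⟨f (pr₁ v : V), hV₁ _ (pr₁ v).2⟩ :=
    Submodule.linearProjOfIsCompl_apply_left hcompl ⟨f (pr₁ v : V), hV₁ _ (pr₁ v).2⟩
  have h2 : pr₁ (f (pr₂ v : V)) = 0 :=
    Submodule.projectionOnto_apply_of_mem_right hcompl (hV₂ _ (pr₂ v).2)
  have hv : f v = f (pr₁ v : V) + f (pr₂ v : V) := by rw [← map_add, hsum]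
  simp only [LinearMap.comp_apply, Submodule.subtype_apply]
  rw [hv, map_add, h1, h2, add_zero]

/-- `pr₁ ∘ f = f.restrict ∘ pr₁`. -/
lemma proj_comm' (f : V →ₗ[K] V) {V₁ V₂ : Submodule K V}
    (hV₁ : ∀ x ∈ V₁, f x ∈ V₁) (hV₂ : ∀ x ∈ V₂, f x ∈ V₂)
    (hcompl : IsCompl V₁ V₂) (v : V) :
    V₁.projectionOnto V₂ hcompl (f v) =
      f.restrict hV₁ (V₁.projectionOnto V₂ hcompl v) :=
  Subtype.ext (proj_comm f hV₁ hV₂ hcompl v)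

/-- Forward direction: a hyperinvariant subspace restricts to a hyperinvariant
subspace of a direct summand. -/
lemma hyperinv_restrict (f : V →ₗ[K] V) {V₁ V₂ : Submodule K V}
    (hV₁ : ∀ x ∈ V₁, f x ∈ V₁) (hV₂ : ∀ x ∈ V₂, f x ∈ V₂)
    (hcompl : IsCompl V₁ V₂) (X : Submodule K V) (hX : Hyperinv f X) :
    Hyperinv (f.restrict hV₁) (X.comap V₁.subtype) := by
  intro g hg x hx
  set pr₁ := V₁.projectionOnto V₂ hcompl with hpr₁
  set G : V →ₗ[K] V := V₁.subtype ∘ₗ g ∘ₗ pr₁ with hG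
  have hGcomm : ∀ v, G (f v) = f (G v) := by
    intro v
    have : ((g (pr₁ (f v))) : V) = ((g (f.restrict hV₁ (pr₁ v))) : V) := by
      rw [proj_comm' f hV₁ hV₂ hcompl v]
    calc G (f v) = ((g (pr₁ (f v))) : V) := rfl
      _ = ((g (f.restrict hV₁ (pr₁ v))) : V) := this
      _ = ((f.restrict hV₁ (g (pr₁ v))) : V) := by rw [hg]
      _ = f (G v) := rfl
  have := hX G hGcomm (x : V) hx
  have hGx : G (x : V) = ((g x : V₁) : V) := by
    simp only [hG, hpr₁, LinearMap.comp_apply, Submodule.subtype_apply,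
      Submodule.linearProjOfIsCompl_apply_left hcompl x]
  rwa [hGx] at this

/-- Backward direction ingredient: `g x₁ ∈ X` for `x₁ ∈ X ∩ V₁`. -/
lemma key_piece (f : V →ₗ[K] V) {V₁ V₂ : Submodule K V}
    (hV₁ : ∀ x ∈ V₁, f x ∈ V₁) (hV₂ : ∀ x ∈ V₂, f x ∈ V₂)
    (hcompl : IsCompl V₁ V₂) (X : Submodule K V)
    (hchar : Charinv f X)
    (hX1 : Hyperinv (f.restrict hV₁) (X.comap V₁.subtype))
    (g : V →ₗ[K] V) (hg : ∀ v, g (f v) = f (g v))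
    (x₁ : V) (hx₁X : x₁ ∈ X) (hx₁V : x₁ ∈ V₁) : g x₁ ∈ X := by
  set pr₁ := V₁.projectionOnto V₂ hcompl with hpr₁
  set pr₂ := V₂.projectionOnto V₁ hcompl.symm with hpr₂
  set p₁ : V →ₗ[K] V := V₁.subtype ∘ₗ pr₁ with hp₁
  set p₂ : V →ₗ[K] V := V₂.subtype ∘ₗ pr₂ with hp₂
  have hsum : ∀ v, p₁ v + p₂ v = v := fun v =>
    Submodule.projection_add_projection_eq_self hcompl v
  have hp₁f : ∀ v, p₁ (f v) = f (p₁ v) := proj_comm f hV₁ hV₂ hcompl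
  have hp₂f : ∀ v, p₂ (f v) = f (p₂ v) := proj_comm f hV₂ hV₁ hcompl.symm
  -- diagonal part : p₁ (g x₁) ∈ X
  have hdiag : p₁ (g x₁) ∈ X := by
    set g₁ : V₁ →ₗ[K] V₁ := pr₁ ∘ₗ g ∘ₗ V₁.subtype with hg₁
    have hg₁comm : ∀ w : V₁, g₁ (f.restrict hV₁ w) = f.restrict hV₁ (g₁ w) := by
      intro w
      calc g₁ (f.restrict hV₁ w) = pr₁ (g (f (w : V))) := rfl
        _ = pr₁ (f (g (w : V))) := by rw [hg]
        _ = f.restrict hV₁ (pr₁ (g (w : V))) := proj_comm' f hV₁ hV₂ hcompl _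
        _ = f.restrict hV₁ (g₁ w) := rfl
    have := hX1 g₁ hg₁comm ⟨x₁, hx₁V⟩ hx₁X
    simpa [hg₁, hp₁] using this
  -- off-diagonal part : p₂ (g x₁) ∈ X, via the automorphism 1 + p₂ ∘ g ∘ p₁
  have hoff : p₂ (g x₁) ∈ X := by
    set h : V →ₗ[K] V := p₂ ∘ₗ g ∘ₗ p₁ with hh_def
    have hp₁p₂ : ∀ w, p₁ (p₂ w) = 0 := by
      intro w
      have h0 : pr₁ ((pr₂ w : V)) = 0 :=
        Submodule.projectionOnto_apply_of_mem_right hcompl (pr₂ w).2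
      simp only [hp₁, hp₂, LinearMap.comp_apply, Submodule.subtype_apply, h0,
        Submodule.coe_zero]
    have hhh : ∀ v, h (h v) = 0 := by
      intro v
      calc h (h v) = p₂ (g (p₁ (p₂ (g (p₁ v))))) := rfl
        _ = 0 := by rw [hp₁p₂]; simp
    have hhf : ∀ v, h (f v) = f (h v) := by
      intro v
      calc h (f v) = p₂ (g (p₁ (f v))) := rfl
        _ = p₂ (g (f (p₁ v))) := by rw [hp₁f]
        _ = p₂ (f (g (p₁ v))) := by rw [hg]
        _ = f (h v) := hp₂f _
    set α : V ≃ₗ[K] V := LinearEquiv.ofLinear (LinearMap.id + h) (LinearMap.id - h)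
      (by ext v; simp [hhh v]) (by ext v; simp [hhh v]) with hα_def
    have hαapp : ∀ v, α v = v + h v := fun v => rfl
    have hαcomm : Commutes f α := by
      intro v
      rw [hαapp, hαapp, hhf, map_add]
    have hαx : α x₁ ∈ X := hchar.2 α hαcomm x₁ hx₁X
    rw [hαapp] at hαx
    have hhx : h x₁ ∈ X := by
      have := X.sub_mem hαx hx₁X
      simpa using this
    have hpx₁ : p₁ x₁ = x₁ := by
      simp only [hp₁, LinearMap.comp_apply, Submodule.subtype_apply]
      rw [hpr₁, Submodule.linearProjOfIsCompl_apply_left hcompl ⟨x₁, hx₁V⟩]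
    have : h x₁ = p₂ (g x₁) := by
      rw [hh_def]; simp only [LinearMap.comp_apply]; rw [hpx₁]
    rwa [this] at hhx
  have := X.add_mem hdiag hoff
  rwa [hsum] at this

end Aux

theorem stmt13 {K V : Type*} [Field K] [AddCommGroup V] [Module K V]
    [FiniteDimensional K V] (f : V →ₗ[K] V) (hf : IsNilpotent f)
    (V₁ V₂ : Submodule K V) (hV₁ : ∀ x ∈ V₁, f x ∈ V₁) (hV₂ : ∀ x ∈ V₂, f x ∈ V₂)
    (hcompl : IsCompl V₁ V₂) (X : Submodule K V) :
    Hyperinv f X ↔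
      Charinv f X ∧ X = (X ⊓ V₁) ⊔ (X ⊓ V₂) ∧
        Hyperinv (f.restrict hV₁) (X.comap V₁.subtype) ∧
        Hyperinv (f.restrict hV₂) (X.comap V₂.subtype) := by
  constructor
  · intro hX
    refine ⟨⟨fun x hx => hX f (fun v => rfl) x hx,
        fun α hα x hx => hX α.toLinearMap hα x hx⟩, ?_, ?_, ?_⟩
    · set pr₁ := V₁.linearProjOfIsCompl V₂ hcompl with hpr₁
      set pr₂ := V₂.linearProjOfIsCompl V₁ hcompl.symm with hpr₂
      set p₁ : V →ₗ[K] V := V₁.subtype ∘ₗ pr₁ with hp₁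
      set p₂ : V →ₗ[K] V := V₂.subtype ∘ₗ pr₂ with hp₂
      have hsum : ∀ v, p₁ v + p₂ v = v := fun v =>
        Submodule.projection_add_projection_eq_self hcompl v
      have hp₁f : ∀ v, p₁ (f v) = f (p₁ v) := proj_comm f hV₁ hV₂ hcompl
      have hp₂f : ∀ v, p₂ (f v) = f (p₂ v) := proj_comm f hV₂ hV₁ hcompl.symm
      apply le_antisymm
      · intro x hx
        have h1 : p₁ x ∈ X ⊓ V₁ := ⟨hX p₁ hp₁f x hx, (pr₁ x).2⟩
        have h2 : p₂ x ∈ X ⊓ V₂ := ⟨hX p₂ hp₂f x hx, (pr₂ x).2⟩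
        have := Submodule.add_mem_sup h1 h2
        rwa [hsum] at this
      · exact sup_le inf_le_left inf_le_left
    · exact hyperinv_restrict f hV₁ hV₂ hcompl X hX
    · exact hyperinv_restrict f hV₂ hV₁ hcompl.symm X hX
  · rintro ⟨hchar, hdec, hX1, hX2⟩
    intro g hg x hx
    rw [hdec] at hx
    obtain ⟨x₁, hx₁, x₂, hx₂, rfl⟩ := Submodule.mem_sup.mp hx
    rw [map_add]
    exact X.add_mem
      (key_piece f hV₁ hV₂ hcompl X hchar hX1 g hg x₁ hx₁.1 hx₁.2)
      (key_piece f hV₂ hV₁ hcompl.symm X hchar hX2 g hg x₂ hx₂.1 hx₂.2)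
end
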